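/- arXiv:2201.11468 — 4 statements merged into one kernel-verified Lean document; each statement's English description precedes it below -/
import Mathlib

section
/- (Theorem 1, restricted weak-type form) Let γ = (φ_1, …, φ_r) be a separated system of r polynomials which is not comprised of a single linear polynomial (i.e., if r = 1 then deg φ_1 ≥ 2). Let s ≥ 2 be an integer. Then there exists a constant C > 0, depending only on s and γ, such that for every finite subset 𝒳 ⊆ ℕ and all nonempty finite subsets E, F ⊆ ℤ^r one has ( #{(n, x) ∈ 𝒳 × F : x + γ(n) ∈ E} )^{2s−1} ≤ C · ( |𝒳|^{s−1} + |𝒳| · J̃_{s−1}^γ(𝒳) ) · |E|^s · |F|^s. (This is the restricted weak-type (p, p′) formulation, with p = 2 − 1/s, of the Lorentz bound ‖A_𝒳^γ‖_{ℓ^{p,1}(ℤ^r) → ℓ^{p′,∞}(ℤ^r)} ≤ C |𝒳|^{−1}( |𝒳|^{s−1} + |𝒳| · J̃_{s−1}^γ(𝒳) )^{1/(2s−1)}, where A_𝒳^γ f(x) = |𝒳|^{−1} ∑_{n ∈ 𝒳} f(x + γ(n)).) -/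
open Finset

namespace RWTProof

variable {r : ℕ}

/-- the polynomial curve -/
def gam (φ : Fin r → Polynomial ℤ) (n : ℕ) : Fin r → ℤ := fun i => (φ i).eval (n : ℤ)

/-- number of `n ∈ 𝒳` with `x + γ(n) = e` -/
def nu (φ : Fin r → Polynomial ℤ) (𝒳 : Finset ℕ) (x e : Fin r → ℤ) : ℕ :=
  (𝒳.filter fun n => x + gam φ n = e).card

/-- weight: number of `n ∈ 𝒳` with `x + γ(n) ∈ E` -/
def wgt (φ : Fin r → Polynomial ℤ) (𝒳 : Finset ℕ) (E : Finset (Fin r → ℤ)) (x : Fin r → ℤ) : ℕ :=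
  (𝒳.filter fun n => x + gam φ n ∈ E).card

/-- total incidence count -/
def cnt (φ : Fin r → Polynomial ℤ) (𝒳 : Finset ℕ) (E F : Finset (Fin r → ℤ)) : ℕ :=
  ∑ x ∈ F, wgt φ 𝒳 E x

/-- one-step kernel -/
def tk (φ : Fin r → Polynomial ℤ) (𝒳 : Finset ℕ) (E : Finset (Fin r → ℤ))
    (z y : Fin r → ℤ) : ℕ := ∑ e ∈ E, nu φ 𝒳 z e * nu φ 𝒳 y e

/-- k-step kernel (intermediate points in F) -/
def pk (φ : Fin r → Polynomial ℤ) (𝒳 : Finset ℕ) (E F : Finset (Fin r → ℤ)) :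
    ℕ → (Fin r → ℤ) → (Fin r → ℤ) → ℕ
  | 0, x, y => if x = y then 1 else 0
  | (k+1), x, y => ∑ z ∈ F, pk φ 𝒳 E F k x z * tk φ 𝒳 E z y

/-- iterated vector (F-side) -/
def vf (φ : Fin r → Polynomial ℤ) (𝒳 : Finset ℕ) (E F : Finset (Fin r → ℤ)) :
    ℕ → (Fin r → ℤ) → ℕ
  | 0, x => wgt φ 𝒳 E x
  | (j+1), x => ∑ e ∈ E, nu φ 𝒳 x e * (∑ z ∈ F, nu φ 𝒳 z e * vf φ 𝒳 E F j z)

/-- iterated vector (E-side) -/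
def ve (φ : Fin r → Polynomial ℤ) (𝒳 : Finset ℕ) (E F : Finset (Fin r → ℤ))
    (j : ℕ) (e : Fin r → ℤ) : ℕ := ∑ z ∈ F, nu φ 𝒳 z e * vf φ 𝒳 E F j z

/-- walk counts -/
def ck (φ : Fin r → Polynomial ℤ) (𝒳 : Finset ℕ) (E F : Finset (Fin r → ℤ)) : ℕ → ℕ
  | 0 => E.card
  | (k+1) => ∑ x ∈ F, wgt φ 𝒳 E x * vf φ 𝒳 E F k x

/-- solution set of the system with prescribed vector of sums -/
def Sol (φ : Fin r → Polynomial ℤ) (𝒳 : Finset ℕ) (k : ℕ) (a : Fin r → ℤ) :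
    Finset ((Fin k → ℕ) × (Fin k → ℕ)) :=
  ((Fintype.piFinset fun _ : Fin k => 𝒳) ×ˢ (Fintype.piFinset fun _ : Fin k => 𝒳)).filter
    (fun q => ∀ j, ∑ i, ((φ j).eval (q.2 i : ℤ) - (φ j).eval (q.1 i : ℤ)) = a j)

/-- the maximal solution count over admissible `a` -/
noncomputable def Jt (φ : Fin r → Polynomial ℤ) (𝒳 : Finset ℕ) (k : ℕ) : ℕ :=
  sSup {m : ℕ | ∃ a : Fin r → ℤ, (∀ j, a j ≠ 0) ∧ m = (Sol φ 𝒳 k a).card}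

section Basic

variable (φ : Fin r → Polynomial ℤ) (𝒳 : Finset ℕ) (E F : Finset (Fin r → ℤ))

lemma wgt_eq_sum_nu (x : Fin r → ℤ) : wgt φ 𝒳 E x = ∑ e ∈ E, nu φ 𝒳 x e := by
  unfold wgt nu
  rw [Finset.card_filter]
  have h1 : ∀ e ∈ E, (𝒳.filter fun n => x + gam φ n = e).card
      = ∑ n ∈ 𝒳, if x + gam φ n = e then 1 else 0 := fun e _ => Finset.card_filter _ _
  rw [Finset.sum_congr rfl h1, Finset.sum_comm]
  apply Finset.sum_congr rfl
  intro n _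
  by_cases h : x + gam φ n ∈ E
  · simp [h, Finset.sum_ite_eq E (x + gam φ n)]
  · simp only [h, if_false]
    symm
    apply Finset.sum_eq_zero
    intro e he
    rw [if_neg]
    intro hee
    exact h (hee ▸ he)

lemma cnt_eq_card :
    ((𝒳 ×ˢ F).filter (fun p => (fun i => p.2 i + (φ i).eval ((p.1 : ℕ) : ℤ)) ∈ E)).card
      = cnt φ 𝒳 E F := by
  rw [Finset.card_filter, Finset.sum_product, Finset.sum_comm]
  apply Finset.sum_congr rfl
  intro x _
  rw [wgt, Finset.card_filter]
  apply Finset.sum_congr rfl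
  intro n _
  congr 1

lemma cnt_eq_sum_X : cnt φ 𝒳 E F = ∑ n ∈ 𝒳, (F.filter fun x => x + gam φ n ∈ E).card := by
  unfold cnt wgt
  have h1 : ∀ x ∈ F, (𝒳.filter fun n => x + gam φ n ∈ E).card
      = ∑ n ∈ 𝒳, if x + gam φ n ∈ E then 1 else 0 := fun x _ => Finset.card_filter _ _
  rw [Finset.sum_congr rfl h1, Finset.sum_comm]
  exact Finset.sum_congr rfl fun n _ => (Finset.card_filter _ _).symm

lemma cnt_le : cnt φ 𝒳 E F ≤ 𝒳.card * E.card := by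
  rw [cnt_eq_sum_X]
  calc ∑ n ∈ 𝒳, (F.filter fun x => x + gam φ n ∈ E).card
      ≤ ∑ _n ∈ 𝒳, E.card := by
        apply Finset.sum_le_sum
        intro n _
        apply Finset.card_le_card_of_injOn (fun x => x + gam φ n)
        · intro x hx
          exact (Finset.mem_filter.mp hx).2
        · intro a _ b _ hab
          exact add_right_cancel hab
    _ = 𝒳.card * E.card := by rw [Finset.sum_const, smul_eq_mul]

lemma cnt_le_F : cnt φ 𝒳 E F ≤ 𝒳.card * F.card := by
  unfold cnt
  calc ∑ x ∈ F, wgt φ 𝒳 E x ≤ ∑ _x ∈ F, 𝒳.card :=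
        Finset.sum_le_sum fun x _ => Finset.card_filter_le _ _
    _ = 𝒳.card * F.card := by rw [Finset.sum_const, smul_eq_mul, mul_comm]

/-- root bound: a nonconstant integer polynomial takes a value at most `natDegree` times on `𝒳` -/
lemma card_eval_eq_le (ψ : Polynomial ℤ) (hψ : 1 ≤ ψ.natDegree) (c : ℤ) :
    (𝒳.filter fun n : ℕ => ψ.eval (n : ℤ) = c).card ≤ ψ.natDegree := by
  have hne : ψ - Polynomial.C c ≠ 0 := by
    intro h0
    have := Polynomial.natDegree_sub_C (p := ψ) (a := c)
    rw [h0] at this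
    simp [Polynomial.natDegree_zero] at this
    omega
  calc (𝒳.filter fun n : ℕ => ψ.eval (n : ℤ) = c).card
      ≤ (ψ - Polynomial.C c).roots.toFinset.card := by
        refine Finset.card_le_card_of_injOn (fun n => (n : ℤ)) ?_ ?_
        · intro n hn
          rw [Finset.mem_coe, Multiset.mem_toFinset, Polynomial.mem_roots hne]
          have := (Finset.mem_filter.mp hn).2
          simp [Polynomial.IsRoot, this]
        · intro a _ b _ h
          have : (a : ℤ) = (b : ℤ) := h
          exact_mod_cast this
    _ ≤ Multiset.card (ψ - Polynomial.C c).roots := Multiset.toFinset_card_le _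
    _ ≤ (ψ - Polynomial.C c).natDegree := Polynomial.card_roots' _
    _ = ψ.natDegree := Polynomial.natDegree_sub_C

lemma nu_le (hr : 1 ≤ r) (hdeg : ∀ i, 1 ≤ (φ i).natDegree) (x e : Fin r → ℤ) :
    nu φ 𝒳 x e ≤ (φ ⟨0, hr⟩).natDegree := by
  set j : Fin r := ⟨0, hr⟩
  calc nu φ 𝒳 x e ≤ (𝒳.filter fun n : ℕ => (φ j).eval (n : ℤ) = e j - x j).card := by
        apply Finset.card_le_card
        intro n hn
        rw [Finset.mem_filter] at hn ⊢
        refine ⟨hn.1, ?_⟩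
        have := congrFun hn.2 j
        simp only [Pi.add_apply] at this
        rw [show gam φ n j = (φ j).eval (n:ℤ) from rfl] at this
        omega
    _ ≤ (φ j).natDegree := card_eval_eq_le 𝒳 (φ j) (hdeg j) _

lemma wgt_le_X (x : Fin r → ℤ) : wgt φ 𝒳 E x ≤ 𝒳.card := Finset.card_filter_le _ _

lemma wgt_le_E (hr : 1 ≤ r) (hdeg : ∀ i, 1 ≤ (φ i).natDegree) (x : Fin r → ℤ) :
    wgt φ 𝒳 E x ≤ (φ ⟨0, hr⟩).natDegree * E.card := by
  rw [wgt_eq_sum_nu]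
  calc ∑ e ∈ E, nu φ 𝒳 x e ≤ ∑ _e ∈ E, (φ ⟨0, hr⟩).natDegree :=
        Finset.sum_le_sum fun e _ => nu_le φ 𝒳 hr hdeg x e
    _ = (φ ⟨0, hr⟩).natDegree * E.card := by rw [Finset.sum_const, smul_eq_mul, mul_comm]

end Basic

section Chain

variable (φ : Fin r → Polynomial ℤ) (𝒳 : Finset ℕ) (E F : Finset (Fin r → ℤ))

lemma L_fe (a b : ℕ) :
    ∑ x ∈ F, vf φ 𝒳 E F (a+1) x * vf φ 𝒳 E F b x
      = ∑ e ∈ E, ve φ 𝒳 E F a e * ve φ 𝒳 E F b e := by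
  have h1 : ∀ x ∈ F, vf φ 𝒳 E F (a+1) x * vf φ 𝒳 E F b x
      = ∑ e ∈ E, nu φ 𝒳 x e * ve φ 𝒳 E F a e * vf φ 𝒳 E F b x := by
    intro x _
    rw [show vf φ 𝒳 E F (a+1) x = ∑ e ∈ E, nu φ 𝒳 x e * ve φ 𝒳 E F a e from rfl,
      Finset.sum_mul]
  rw [Finset.sum_congr rfl h1, Finset.sum_comm]
  apply Finset.sum_congr rfl
  intro e _
  rw [show ve φ 𝒳 E F b e = ∑ z ∈ F, nu φ 𝒳 z e * vf φ 𝒳 E F b z from rfl, Finset.mul_sum]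
  apply Finset.sum_congr rfl
  intro x _
  ring

lemma SH (a b : ℕ) :
    ∑ x ∈ F, vf φ 𝒳 E F (a+1) x * vf φ 𝒳 E F b x
      = ∑ x ∈ F, vf φ 𝒳 E F a x * vf φ 𝒳 E F (b+1) x := by
  rw [L_fe]
  have h2 : ∑ x ∈ F, vf φ 𝒳 E F a x * vf φ 𝒳 E F (b+1) x
      = ∑ x ∈ F, vf φ 𝒳 E F (b+1) x * vf φ 𝒳 E F a x :=
    Finset.sum_congr rfl fun x _ => mul_comm _ _
  rw [h2, L_fe]
  exact Finset.sum_congr rfl fun e _ => mul_comm _ _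

lemma c_pair (a b : ℕ) :
    ∑ x ∈ F, vf φ 𝒳 E F a x * vf φ 𝒳 E F b x = ck φ 𝒳 E F (a+b+1) := by
  induction a generalizing b with
  | zero => simp only [Nat.zero_add]; rfl
  | succ a ih =>
      rw [SH, ih (b+1)]
      congr 1
      omega

lemma c_pair_e (a b : ℕ) :
    ∑ e ∈ E, ve φ 𝒳 E F a e * ve φ 𝒳 E F b e = ck φ 𝒳 E F (a+b+2) := by
  rw [← L_fe, c_pair]
  congr 1
  omega

lemma c_sum_e (a : ℕ) : ∑ e ∈ E, ve φ 𝒳 E F a e = ck φ 𝒳 E F (a+1) := by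
  have : ck φ 𝒳 E F (a+1) = ∑ x ∈ F, (∑ e ∈ E, nu φ 𝒳 x e) * vf φ 𝒳 E F a x := by
    rw [show ck φ 𝒳 E F (a+1) = ∑ x ∈ F, wgt φ 𝒳 E x * vf φ 𝒳 E F a x from rfl]
    exact Finset.sum_congr rfl fun x _ => by rw [wgt_eq_sum_nu]
  rw [this]
  have h1 : ∀ x ∈ F, (∑ e ∈ E, nu φ 𝒳 x e) * vf φ 𝒳 E F a x
      = ∑ e ∈ E, nu φ 𝒳 x e * vf φ 𝒳 E F a x := fun x _ => Finset.sum_mul ..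
  rw [Finset.sum_congr rfl h1, Finset.sum_comm]
  exact Finset.sum_congr rfl fun e _ => rfl

lemma csq (k : ℕ) (hk : 1 ≤ k) :
    ((ck φ 𝒳 E F k : ℝ))^2 ≤ (ck φ 𝒳 E F (k-1) : ℝ) * (ck φ 𝒳 E F (k+1) : ℝ) := by
  rcases Nat.even_or_odd k with ⟨j, hj⟩ | ⟨j, hj⟩
  · -- k = 2j, j ≥ 1, so k = 2(j-1)+2
    obtain ⟨i, rfl⟩ : ∃ i, j = i + 1 := ⟨j - 1, by omega⟩
    have hk2 : k = (i+1) + i + 1 := by omega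
    have e1 : (ck φ 𝒳 E F k : ℝ) = ∑ x ∈ F, (vf φ 𝒳 E F (i+1) x : ℝ) * (vf φ 𝒳 E F i x : ℝ) := by
      rw [hk2, ← c_pair]
      push_cast
      rfl
    have e2 : (ck φ 𝒳 E F (k+1) : ℝ) = ∑ x ∈ F, (vf φ 𝒳 E F (i+1) x : ℝ)^2 := by
      have : k + 1 = (i+1)+(i+1)+1 := by omega
      rw [this, ← c_pair]
      push_cast
      exact Finset.sum_congr rfl fun x _ => (sq ((vf φ 𝒳 E F (i+1) x : ℝ))).symm
    have e3 : (ck φ 𝒳 E F (k-1) : ℝ) = ∑ x ∈ F, (vf φ 𝒳 E F i x : ℝ)^2 := by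
      have : k - 1 = i+i+1 := by omega
      rw [this, ← c_pair]
      push_cast
      exact Finset.sum_congr rfl fun x _ => (sq ((vf φ 𝒳 E F i x : ℝ))).symm
    rw [e1, e2, e3, mul_comm]
    exact Finset.sum_mul_sq_le_sq_mul_sq F _ _
  · -- k odd
    rcases Nat.eq_zero_or_pos j with rfl | hj1
    · -- k = 1
      have h2 := c_sum_e φ 𝒳 E F 0
      have h3 := c_pair_e φ 𝒳 E F 0 0
      norm_num at h2 h3
      have e1 : (ck φ 𝒳 E F 1 : ℝ) = ∑ e ∈ E, (1:ℝ) * (ve φ 𝒳 E F 0 e : ℝ) := by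
        rw [← h2]
        push_cast
        exact Finset.sum_congr rfl fun e _ => (one_mul _).symm
      have e2 : (ck φ 𝒳 E F 2 : ℝ) = ∑ e ∈ E, (ve φ 𝒳 E F 0 e : ℝ)^2 := by
        rw [← h3]
        push_cast
        exact Finset.sum_congr rfl fun e _ => (sq _).symm
      have e3 : (ck φ 𝒳 E F 0 : ℝ) = ∑ e ∈ E, (1:ℝ)^2 := by
        simp [ck]
      subst hj
      simp only [show 2*0+1 = 1 from rfl, show (1:ℕ)-1 = 0 from rfl, show (1:ℕ)+1 = 2 from rfl]
      rw [e1, e2, e3]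
      exact Finset.sum_mul_sq_le_sq_mul_sq E _ _
    · -- k = 2j+1, j ≥ 1: k = 2(j-1)+3
      obtain ⟨i, rfl⟩ : ∃ i, j = i + 1 := ⟨j - 1, by omega⟩
      have e1 : (ck φ 𝒳 E F k : ℝ) = ∑ e ∈ E, (ve φ 𝒳 E F (i+1) e : ℝ) * (ve φ 𝒳 E F i e : ℝ) := by
        have : k = (i+1)+i+2 := by omega
        rw [this, ← c_pair_e]
        push_cast
        rfl
      have e2 : (ck φ 𝒳 E F (k+1) : ℝ) = ∑ e ∈ E, (ve φ 𝒳 E F (i+1) e : ℝ)^2 := by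
        have : k + 1 = (i+1)+(i+1)+2 := by omega
        rw [this, ← c_pair_e]
        push_cast
        exact Finset.sum_congr rfl fun e _ => (sq _).symm
      have e3 : (ck φ 𝒳 E F (k-1) : ℝ) = ∑ e ∈ E, (ve φ 𝒳 E F i e : ℝ)^2 := by
        have : k - 1 = i+i+2 := by omega
        rw [this, ← c_pair_e]
        push_cast
        exact Finset.sum_congr rfl fun e _ => (sq _).symm
      rw [e1, e2, e3, mul_comm]
      exact Finset.sum_mul_sq_le_sq_mul_sq E _ _

lemma cnt_sq_le : ((cnt φ 𝒳 E F : ℝ))^2 ≤ (F.card : ℝ) * (ck φ 𝒳 E F 1 : ℝ) := by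
  have e1 : (cnt φ 𝒳 E F : ℝ) = ∑ x ∈ F, (1:ℝ) * (wgt φ 𝒳 E x : ℝ) := by
    rw [cnt]
    push_cast
    exact Finset.sum_congr rfl fun x _ => (one_mul _).symm
  have e2 : (ck φ 𝒳 E F 1 : ℝ) = ∑ x ∈ F, (wgt φ 𝒳 E x : ℝ)^2 := by
    rw [show ck φ 𝒳 E F 1 = ∑ x ∈ F, wgt φ 𝒳 E x * vf φ 𝒳 E F 0 x from rfl]
    push_cast
    exact Finset.sum_congr rfl fun x _ => (sq _).symm
  have e3 : (F.card : ℝ) = ∑ _x ∈ F, (1:ℝ)^2 := by simp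
  rw [e1, e2, e3]
  exact Finset.sum_mul_sq_le_sq_mul_sq F _ _

end Chain

/-- generic log-convexity chain lemma -/
lemma chain_lemma (u : ℕ → ℝ) (hnn : ∀ k, 0 ≤ u k)
    (hcs : ∀ k, 1 ≤ k → u k ^ 2 ≤ u (k-1) * u (k+1)) :
    ∀ k, 1 ≤ k → u 1 ^ k ≤ u 0 ^ (k-1) * u k := by
  have aux : ∀ k, u k * u 1 ≤ u 0 * u (k+1) := by
    intro k
    induction k with
    | zero => rw [mul_comm]
    | succ k ih =>
        rcases eq_or_lt_of_le (hnn (k+1)) with h0 | hpos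
        · rw [← h0, zero_mul]
          exact mul_nonneg (hnn 0) (hnn (k+2))
        · have h1 : u (k+1) ^ 2 ≤ u k * u (k+2) := by
            have := hcs (k+1) (by omega)
            simpa using this
          have h2 : u (k+1) * (u (k+1) * u 1) ≤ u (k+1) * (u 0 * u (k+2)) := by
            calc u (k+1) * (u (k+1) * u 1) = u (k+1)^2 * u 1 := by ring
              _ ≤ (u k * u (k+2)) * u 1 := mul_le_mul_of_nonneg_right h1 (hnn 1)
              _ = (u k * u 1) * u (k+2) := by ring
              _ ≤ (u 0 * u (k+1)) * u (k+2) := mul_le_mul_of_nonneg_right ih (hnn (k+2))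
              _ = u (k+1) * (u 0 * u (k+2)) := by ring
          exact le_of_mul_le_mul_left h2 hpos
  intro k hk
  induction k with
  | zero => omega
  | succ k ih =>
      rcases Nat.eq_zero_or_pos k with rfl | hk1
      · simp
      · have ihh := ih hk1
        calc u 1 ^ (k+1) = u 1 ^ k * u 1 := by ring
          _ ≤ (u 0 ^ (k-1) * u k) * u 1 :=
              mul_le_mul_of_nonneg_right ihh (hnn 1)
          _ = u 0 ^ (k-1) * (u k * u 1) := by ring
          _ ≤ u 0 ^ (k-1) * (u 0 * u (k+1)) :=
              mul_le_mul_of_nonneg_left (aux k) (pow_nonneg (hnn 0) _)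
          _ = u 0 ^ (k-1) * u 0 * u (k+1) := by ring
          _ = u 0 ^ k * u (k+1) := by
              congr 1
              rw [← pow_succ]
              congr 1
              omega

section Kernel

variable (φ : Fin r → Polynomial ℤ) (𝒳 : Finset ℕ) (E F : Finset (Fin r → ℤ))

/-- two-point function representation -/
def Bq (k : ℕ) : ℕ := ∑ x ∈ F, ∑ y ∈ F, wgt φ 𝒳 E x * pk φ 𝒳 E F k x y * wgt φ 𝒳 E y

lemma vf_eq_sum_pk : ∀ j, ∀ y ∈ F, vf φ 𝒳 E F j y = ∑ x ∈ F, wgt φ 𝒳 E x * pk φ 𝒳 E F j x y := by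
  intro j
  induction j with
  | zero =>
      intro y hy
      have : ∀ x ∈ F, wgt φ 𝒳 E x * pk φ 𝒳 E F 0 x y
          = if x = y then wgt φ 𝒳 E x else 0 := by
        intro x _
        rw [show pk φ 𝒳 E F 0 x y = if x = y then 1 else 0 from rfl, mul_ite, mul_one, mul_zero]
      rw [Finset.sum_congr rfl this, Finset.sum_ite_eq' F y (wgt φ 𝒳 E), if_pos hy]
      rfl
  | succ j ih =>
      intro y _
      have step1 : vf φ 𝒳 E F (j+1) y
          = ∑ e ∈ E, nu φ 𝒳 y e * (∑ z ∈ F, nu φ 𝒳 z e * (∑ x ∈ F, wgt φ 𝒳 E x * pk φ 𝒳 E F j x z)) := by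
        rw [show vf φ 𝒳 E F (j+1) y
            = ∑ e ∈ E, nu φ 𝒳 y e * (∑ z ∈ F, nu φ 𝒳 z e * vf φ 𝒳 E F j z) from rfl]
        apply Finset.sum_congr rfl
        intro e _
        congr 1
        exact Finset.sum_congr rfl fun z hz => by rw [ih z hz]
      rw [step1]
      have step2 : ∀ e ∈ E, nu φ 𝒳 y e * (∑ z ∈ F, nu φ 𝒳 z e * (∑ x ∈ F, wgt φ 𝒳 E x * pk φ 𝒳 E F j x z))
          = ∑ z ∈ F, ∑ x ∈ F, nu φ 𝒳 y e * nu φ 𝒳 z e * (wgt φ 𝒳 E x * pk φ 𝒳 E F j x z) := by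
        intro e _
        rw [Finset.mul_sum]
        apply Finset.sum_congr rfl
        intro z _
        rw [Finset.mul_sum, Finset.mul_sum]
        exact Finset.sum_congr rfl fun x _ => by ring
      rw [Finset.sum_congr rfl step2, Finset.sum_comm]
      -- now : ∑ z ∈ F, ∑ e ∈ E, ∑ x ∈ F, ...
      have step3 : ∀ z ∈ F, (∑ e ∈ E, ∑ x ∈ F, nu φ 𝒳 y e * nu φ 𝒳 z e * (wgt φ 𝒳 E x * pk φ 𝒳 E F j x z))
          = ∑ x ∈ F, wgt φ 𝒳 E x * (pk φ 𝒳 E F j x z * tk φ 𝒳 E z y) := by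
        intro z _
        rw [Finset.sum_comm]
        apply Finset.sum_congr rfl
        intro x _
        rw [show tk φ 𝒳 E z y = ∑ e ∈ E, nu φ 𝒳 z e * nu φ 𝒳 y e from rfl]
        rw [Finset.mul_sum, Finset.mul_sum]
        exact Finset.sum_congr rfl fun e _ => by ring
      rw [Finset.sum_congr rfl step3, Finset.sum_comm]
      apply Finset.sum_congr rfl
      intro x _
      rw [show pk φ 𝒳 E F (j+1) x y = ∑ z ∈ F, pk φ 𝒳 E F j x z * tk φ 𝒳 E z y from rfl]
      rw [Finset.mul_sum]

lemma ck_eq_Bq (k : ℕ) : ck φ 𝒳 E F (k+1) = Bq φ 𝒳 E F k := by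
  rw [show ck φ 𝒳 E F (k+1) = ∑ y ∈ F, wgt φ 𝒳 E y * vf φ 𝒳 E F k y from rfl, Bq]
  have h1 : ∀ y ∈ F, wgt φ 𝒳 E y * vf φ 𝒳 E F k y
      = ∑ x ∈ F, wgt φ 𝒳 E x * pk φ 𝒳 E F k x y * wgt φ 𝒳 E y := by
    intro y hy
    rw [vf_eq_sum_pk φ 𝒳 E F k y hy, Finset.mul_sum]
    exact Finset.sum_congr rfl fun x _ => by ring
  rw [Finset.sum_congr rfl h1, Finset.sum_comm]

end Kernel

section SolCount

variable (φ : Fin r → Polynomial ℤ) (𝒳 : Finset ℕ) (E F : Finset (Fin r → ℤ))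

/-- pairs realizing one step of the walk from `z` to `y` -/
def Tset (z y : Fin r → ℤ) : Finset (ℕ × ℕ) :=
  (𝒳 ×ˢ 𝒳).filter fun q => z + gam φ q.1 ∈ E ∧ z + gam φ q.1 = y + gam φ q.2

lemma tk_eq_card (z y : Fin r → ℤ) : tk φ 𝒳 E z y = (Tset φ 𝒳 E z y).card := by
  have hT : Tset φ 𝒳 E z y
      = E.biUnion (fun e => (𝒳.filter fun n => z + gam φ n = e) ×ˢ (𝒳.filter fun n => y + gam φ n = e)) := by
    ext q
    simp only [Tset, Finset.mem_biUnion, Finset.mem_product, Finset.mem_filter]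
    constructor
    · rintro ⟨⟨h1, h2⟩, h3, h4⟩
      exact ⟨z + gam φ q.1, h3, ⟨h1, rfl⟩, ⟨h2, h4.symm⟩⟩
    · rintro ⟨e, he, ⟨h1, h2⟩, ⟨h3, h4⟩⟩
      exact ⟨⟨h1, h3⟩, h2 ▸ he, by rw [h2, h4]⟩
  rw [hT, Finset.card_biUnion]
  · exact Finset.sum_congr rfl fun e _ => by rw [Finset.card_product]; rfl
  · intro e _ e' _ hee
    apply Finset.disjoint_left.mpr
    intro q hq hq'
    rw [Finset.mem_product, Finset.mem_filter] at hq hq'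
    exact hee (hq.1.2.symm.trans hq'.1.2)

lemma conv_le (k : ℕ) (x y : Fin r → ℤ) :
    ∑ z ∈ F, (Sol φ 𝒳 k (z - x)).card * (Tset φ 𝒳 E z y).card
      ≤ (Sol φ 𝒳 (k+1) (y - x)).card := by
  classical
  have hcard : ∑ z ∈ F, (Sol φ 𝒳 k (z - x)).card * (Tset φ 𝒳 E z y).card
      = (F.sigma (fun z => (Sol φ 𝒳 k (z - x)) ×ˢ (Tset φ 𝒳 E z y))).card := by
    rw [Finset.card_sigma]
    exact Finset.sum_congr rfl fun z _ => (Finset.card_product _ _).symm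
  rw [hcard]
  apply Finset.card_le_card_of_injOn
    (fun q => (Fin.snoc q.2.1.1 q.2.2.2, Fin.snoc q.2.1.2 q.2.2.1))
  · -- maps into Sol (k+1) (y - x)
    rintro ⟨z, ⟨⟨u, v⟩, ⟨n, n'⟩⟩⟩ hmem
    rw [Finset.mem_coe, Finset.mem_sigma] at hmem
    obtain ⟨hzF, hmem⟩ := hmem
    rw [Finset.mem_product] at hmem
    obtain ⟨hsol, htset⟩ := hmem
    rw [Sol, Finset.mem_filter, Finset.mem_product] at hsol
    obtain ⟨⟨hu, hv⟩, hsum⟩ := hsol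
    rw [Tset, Finset.mem_filter, Finset.mem_product] at htset
    obtain ⟨⟨hn, hn'⟩, _, heq⟩ := htset
    rw [Finset.mem_coe, Sol, Finset.mem_filter, Finset.mem_product]
    refine ⟨⟨?_, ?_⟩, ?_⟩
    · rw [Fintype.mem_piFinset]
      intro i
      refine Fin.lastCases ?_ ?_ i
      · simpa using hn'
      · intro i
        simpa using (Fintype.mem_piFinset.mp hu) i
    · rw [Fintype.mem_piFinset]
      intro i
      refine Fin.lastCases ?_ ?_ i
      · simpa using hn
      · intro i
        simpa using (Fintype.mem_piFinset.mp hv) i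
    · intro j
      rw [Fin.sum_univ_castSucc]
      simp only [Fin.snoc_castSucc, Fin.snoc_last]
      have h1 := hsum j
      have h2 := congrFun heq j
      simp only [Pi.add_apply] at h2
      have h3 : gam φ n j = (φ j).eval (n : ℤ) := rfl
      have h4 : gam φ n' j = (φ j).eval (n' : ℤ) := rfl
      rw [h3, h4] at h2
      rw [h1]
      simp only [Pi.sub_apply]
      omega
  · -- injective
    rintro ⟨z, ⟨⟨u, v⟩, ⟨n, n'⟩⟩⟩ hmem ⟨z', ⟨⟨u', v'⟩, ⟨m, m'⟩⟩⟩ hmem' heq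
    simp only [Prod.mk.injEq] at heq
    obtain ⟨h1, h2⟩ := heq
    have hn' : n' = m' := by
      have := congrFun h1 (Fin.last k)
      simpa using this
    have hu : u = u' := by
      funext i
      have := congrFun h1 i.castSucc
      simpa using this
    have hn : n = m := by
      have := congrFun h2 (Fin.last k)
      simpa using this
    have hv : v = v' := by
      funext i
      have := congrFun h2 i.castSucc
      simpa using this
    -- now z = z' from the Sol conditions
    rw [Finset.coe_sigma] at hmem hmem'
    rw [Set.mem_sigma_iff] at hmem hmem'
    have hsol := hmem.2
    have hsol' := hmem'.2
    rw [Finset.mem_coe, Finset.mem_product, Sol, Finset.mem_filter] at hsol hsol'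
    have hz : z = z' := by
      funext j
      have e1 := hsol.1.2 j
      have e2 := hsol'.1.2 j
      rw [hu, hv] at e1
      rw [e1] at e2
      simp only [Pi.sub_apply] at e2
      omega
    subst hz hu hv hn hn'
    rfl

/-- one-step bound of the kernel by solution counts -/
lemma pk_le_sol (k : ℕ) (x y : Fin r → ℤ) :
    pk φ 𝒳 E F k x y ≤ (Sol φ 𝒳 k (y - x)).card := by
  induction k generalizing y with
  | zero =>
      by_cases hxy : x = y
      · subst hxy
        rw [show pk φ 𝒳 E F 0 x x = 1 from if_pos rfl]
        rw [Nat.succ_le_iff, Finset.card_pos]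
        refine ⟨⟨fun i => i.elim0, fun i => i.elim0⟩, ?_⟩
        rw [Sol, Finset.mem_filter, Finset.mem_product]
        refine ⟨⟨?_, ?_⟩, ?_⟩
        · rw [Fintype.mem_piFinset]; exact fun i => i.elim0
        · rw [Fintype.mem_piFinset]; exact fun i => i.elim0
        · intro j
          simp
      · rw [show pk φ 𝒳 E F 0 x y = if x = y then 1 else 0 from rfl, if_neg hxy]
        exact Nat.zero_le _
  | succ k ih =>
      calc pk φ 𝒳 E F (k+1) x y = ∑ z ∈ F, pk φ 𝒳 E F k x z * tk φ 𝒳 E z y := rfl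
        _ ≤ ∑ z ∈ F, (Sol φ 𝒳 k (z - x)).card * (Tset φ 𝒳 E z y).card := by
            apply Finset.sum_le_sum
            intro z _
            rw [tk_eq_card]
            exact Nat.mul_le_mul_right _ (ih z)
        _ ≤ (Sol φ 𝒳 (k+1) (y - x)).card := conv_le φ 𝒳 E F k x y

lemma Jt_bddAbove (k : ℕ) :
    BddAbove {m : ℕ | ∃ a : Fin r → ℤ, (∀ j, a j ≠ 0) ∧ m = (Sol φ 𝒳 k a).card} := by
  refine ⟨((Fintype.piFinset fun _ : Fin k => 𝒳) ×ˢ (Fintype.piFinset fun _ : Fin k => 𝒳)).card, ?_⟩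
  rintro m ⟨a, _, rfl⟩
  exact Finset.card_filter_le _ _

lemma sol_card_le_Jt (k : ℕ) (a : Fin r → ℤ) (ha : ∀ j, a j ≠ 0) :
    (Sol φ 𝒳 k a).card ≤ Jt φ 𝒳 k :=
  le_csSup (Jt_bddAbove φ 𝒳 k) ⟨a, ha, rfl⟩

lemma Jt_mono (hr : 1 ≤ r) (k : ℕ) : 𝒳.card * Jt φ 𝒳 k ≤ Jt φ 𝒳 (k+1) := by
  have hne : {m : ℕ | ∃ a : Fin r → ℤ, (∀ j, a j ≠ 0) ∧ m = (Sol φ 𝒳 k a).card}.Nonempty :=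
    ⟨(Sol φ 𝒳 k (fun _ => 1)).card, fun _ => 1, fun _ => one_ne_zero, rfl⟩
  obtain ⟨a, ha, hJt⟩ := Nat.sSup_mem hne (Jt_bddAbove φ 𝒳 k)
  rw [Jt, hJt]
  calc 𝒳.card * (Sol φ 𝒳 k a).card = (𝒳 ×ˢ Sol φ 𝒳 k a).card := (Finset.card_product _ _).symm
    _ ≤ (Sol φ 𝒳 (k+1) a).card := by
        apply Finset.card_le_card_of_injOn
          (fun q => (Fin.snoc q.2.1 q.1, Fin.snoc q.2.2 q.1))
        · rintro ⟨n, ⟨u, v⟩⟩ hmem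
          rw [Finset.mem_coe, Finset.mem_product] at hmem
          obtain ⟨hn, hsol⟩ := hmem
          rw [Sol, Finset.mem_filter, Finset.mem_product] at hsol
          obtain ⟨⟨hu, hv⟩, hsum⟩ := hsol
          rw [Finset.mem_coe, Sol, Finset.mem_filter, Finset.mem_product]
          refine ⟨⟨?_, ?_⟩, ?_⟩
          · rw [Fintype.mem_piFinset]
            intro i
            refine Fin.lastCases ?_ ?_ i
            · simpa using hn
            · intro i; simpa using (Fintype.mem_piFinset.mp hu) i
          · rw [Fintype.mem_piFinset]
            intro i
            refine Fin.lastCases ?_ ?_ i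
            · simpa using hn
            · intro i; simpa using (Fintype.mem_piFinset.mp hv) i
          · intro j
            rw [Fin.sum_univ_castSucc]
            simp only [Fin.snoc_castSucc, Fin.snoc_last]
            rw [hsum j]
            ring
        · rintro ⟨n, ⟨u, v⟩⟩ _ ⟨m, ⟨u', v'⟩⟩ _ heq
          simp only [Prod.mk.injEq] at heq
          obtain ⟨h1, h2⟩ := heq
          have hn : n = m := by
            have := congrFun h1 (Fin.last k)
            simpa using this
          have hu : u = u' := by
            funext i
            have := congrFun h1 i.castSucc
            simpa using this
          have hv : v = v' := by
            funext i
            have := congrFun h2 i.castSucc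
            simpa using this
          subst hn hu hv
          rfl
    _ ≤ sSup {m : ℕ | ∃ a : Fin r → ℤ, (∀ j, a j ≠ 0) ∧ m = (Sol φ 𝒳 (k+1) a).card} :=
        le_csSup (Jt_bddAbove φ 𝒳 (k+1)) ⟨a, ha, rfl⟩

end SolCount

section GoodBad

variable (φ : Fin r → Polynomial ℤ) (𝒳 : Finset ℕ) (E F : Finset (Fin r → ℤ))

/-- total degree -/
def Dg (φ : Fin r → Polynomial ℤ) : ℕ := ∑ j, (φ j).natDegree

open Classical in
/-- Key fiber bound: the sum of one-step kernels landing on a "bad" endpoint is small. -/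
lemma bad_fiber (hr : 1 ≤ r) (hdeg : ∀ i, 1 ≤ (φ i).natDegree) (x z : Fin r → ℤ) :
    ∑ y ∈ F.filter (fun y => ¬ ∀ j, x j ≠ y j), tk φ 𝒳 E z y ≤ Dg φ * wgt φ 𝒳 E z := by
  classical
  set badF := F.filter (fun y => ¬ ∀ j, x j ≠ y j) with hbadF
  have h1 : ∑ y ∈ badF, tk φ 𝒳 E z y = (badF.sigma (fun y => Tset φ 𝒳 E z y)).card := by
    rw [Finset.card_sigma]
    exact Finset.sum_congr rfl fun y _ => tk_eq_card φ 𝒳 E z y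
  rw [h1]
  set Vj : Fin r → Finset (ℕ × ℕ) := fun j => (𝒳 ×ˢ 𝒳).filter
    (fun q => z + gam φ q.1 ∈ E ∧ (φ j).eval ((q.2 : ℕ) : ℤ) = z j + (φ j).eval ((q.1 : ℕ) : ℤ) - x j)
    with hVj
  have h2 : (badF.sigma (fun y => Tset φ 𝒳 E z y)).card
      ≤ ((Finset.univ : Finset (Fin r)).sigma Vj).card := by
    apply Finset.card_le_card_of_injOn
      (fun q => ⟨if h : ∃ j, x j = q.1 j then h.choose else ⟨0, hr⟩, q.2⟩)
    · rintro ⟨y, ⟨n, n'⟩⟩ hmem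
      rw [Finset.mem_coe, Finset.mem_sigma] at hmem
      obtain ⟨hy, hT⟩ := hmem
      rw [hbadF, Finset.mem_filter] at hy
      have hex : ∃ j, x j = y j := by
        have := hy.2
        push_neg at this
        exact this
      rw [Finset.mem_coe, Finset.mem_sigma]
      simp only [hex, dif_pos]
      refine ⟨Finset.mem_univ _, ?_⟩
      rw [Tset, Finset.mem_filter, Finset.mem_product] at hT
      obtain ⟨⟨hn, hn'⟩, hE, heq⟩ := hT
      rw [hVj]
      rw [Finset.mem_filter, Finset.mem_product]
      refine ⟨⟨hn, hn'⟩, hE, ?_⟩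
      have hspec : x hex.choose = y hex.choose := hex.choose_spec
      have h3 := congrFun heq hex.choose
      simp only [Pi.add_apply] at h3
      have h4 : gam φ n hex.choose = (φ hex.choose).eval (n : ℤ) := rfl
      have h5 : gam φ n' hex.choose = (φ hex.choose).eval (n' : ℤ) := rfl
      rw [h4, h5] at h3
      dsimp only
      omega
    · rintro ⟨y, ⟨n, n'⟩⟩ hmem ⟨y', ⟨m, m'⟩⟩ hmem' heq
      rw [Finset.coe_sigma, Set.mem_sigma_iff] at hmem hmem'
      rw [Sigma.mk.inj_iff] at heq
      have hpair : (n, n') = (m, m') := eq_of_heq heq.2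
      have hnm : n = m := congrArg Prod.fst hpair
      have hnm' : n' = m' := congrArg Prod.snd hpair
      have hT := hmem.2
      have hT' := hmem'.2
      rw [Finset.mem_coe, Tset, Finset.mem_filter] at hT hT'
      have hy : y = y' := by
        have e1 := hT.2.2
        have e2 := hT'.2.2
        rw [← hnm, ← hnm'] at e2
        have : y + gam φ n' = y' + gam φ n' := by rw [← e1, ← e2]
        funext i
        have := congrFun this i
        simp only [Pi.add_apply] at this
        omega
      subst hy hnm hnm'
      rfl
  apply le_trans h2
  rw [Finset.card_sigma]
  have h6 : ∀ j ∈ (Finset.univ : Finset (Fin r)), (Vj j).card ≤ (φ j).natDegree * wgt φ 𝒳 E z := by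
    intro j _
    rw [hVj]
    have h7 : ((𝒳 ×ˢ 𝒳).filter
        (fun q => z + gam φ q.1 ∈ E ∧ (φ j).eval ((q.2 : ℕ) : ℤ) = z j + (φ j).eval ((q.1 : ℕ) : ℤ) - x j)).card
        = ∑ n ∈ 𝒳, ∑ n' ∈ 𝒳, if z + gam φ n ∈ E ∧ (φ j).eval ((n' : ℕ) : ℤ) = z j + (φ j).eval ((n : ℕ) : ℤ) - x j then 1 else 0 := by
      rw [Finset.card_filter, Finset.sum_product]
    rw [h7]
    calc ∑ n ∈ 𝒳, ∑ n' ∈ 𝒳, (if z + gam φ n ∈ E ∧ (φ j).eval ((n' : ℕ) : ℤ) = z j + (φ j).eval ((n : ℕ) : ℤ) - x j then 1 else 0)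
        ≤ ∑ n ∈ 𝒳, (if z + gam φ n ∈ E then (φ j).natDegree else 0) := by
          apply Finset.sum_le_sum
          intro n _
          by_cases hP : z + gam φ n ∈ E
          · rw [if_pos hP]
            have : ∀ n' ∈ 𝒳, (if z + gam φ n ∈ E ∧ (φ j).eval ((n' : ℕ) : ℤ) = z j + (φ j).eval ((n : ℕ) : ℤ) - x j then 1 else 0)
                = if (φ j).eval ((n' : ℕ) : ℤ) = z j + (φ j).eval ((n : ℕ) : ℤ) - x j then 1 else 0 := by
              intro n' _
              by_cases hQ : (φ j).eval ((n' : ℕ) : ℤ) = z j + (φ j).eval ((n : ℕ) : ℤ) - x j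
              · rw [if_pos ⟨hP, hQ⟩, if_pos hQ]
              · rw [if_neg (fun h => hQ h.2), if_neg hQ]
            rw [Finset.sum_congr rfl this, ← Finset.card_filter]
            exact card_eval_eq_le 𝒳 (φ j) (hdeg j) _
          · rw [if_neg hP]
            apply le_of_eq
            exact Finset.sum_eq_zero fun n' _ => if_neg (fun h => hP h.1)
      _ = (φ j).natDegree * wgt φ 𝒳 E z := by
          rw [← Finset.sum_filter, Finset.sum_const, smul_eq_mul, wgt, mul_comm]
  calc ∑ j, (Vj j).card ≤ ∑ j, (φ j).natDegree * wgt φ 𝒳 E z := Finset.sum_le_sum h6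
    _ = Dg φ * wgt φ 𝒳 E z := by rw [Dg, Finset.sum_mul]

lemma Bq_rec (hr : 1 ≤ r) (hdeg : ∀ i, 1 ≤ (φ i).natDegree)
    (Kb : ℕ) (hK : ∀ y, wgt φ 𝒳 E y ≤ Kb) (k : ℕ) :
    Bq φ 𝒳 E F (k+1) ≤ Jt φ 𝒳 (k+1) * (cnt φ 𝒳 E F * cnt φ 𝒳 E F)
      + (Dg φ * Kb) * Bq φ 𝒳 E F k := by
  classical
  have hsplit : Bq φ 𝒳 E F (k+1)
      = (∑ x ∈ F, ∑ y ∈ F.filter (fun y => ∀ j, x j ≠ y j),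
          wgt φ 𝒳 E x * pk φ 𝒳 E F (k+1) x y * wgt φ 𝒳 E y)
      + (∑ x ∈ F, ∑ y ∈ F.filter (fun y => ¬ ∀ j, x j ≠ y j),
          wgt φ 𝒳 E x * pk φ 𝒳 E F (k+1) x y * wgt φ 𝒳 E y) := by
    rw [Bq, ← Finset.sum_add_distrib]
    exact Finset.sum_congr rfl fun x _ =>
      (Finset.sum_filter_add_sum_filter_not F _ _).symm
  rw [hsplit]
  apply add_le_add
  · -- good part
    calc (∑ x ∈ F, ∑ y ∈ F.filter (fun y => ∀ j, x j ≠ y j),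
          wgt φ 𝒳 E x * pk φ 𝒳 E F (k+1) x y * wgt φ 𝒳 E y)
        ≤ ∑ x ∈ F, ∑ y ∈ F.filter (fun y => ∀ j, x j ≠ y j),
            wgt φ 𝒳 E x * Jt φ 𝒳 (k+1) * wgt φ 𝒳 E y := by
          apply Finset.sum_le_sum
          intro x _
          apply Finset.sum_le_sum
          intro y hy
          have hgood := (Finset.mem_filter.mp hy).2
          have h1 : pk φ 𝒳 E F (k+1) x y ≤ Jt φ 𝒳 (k+1) := by
            refine le_trans (pk_le_sol φ 𝒳 E F (k+1) x y) ?_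
            apply sol_card_le_Jt
            intro j
            have h2 := hgood j
            simp only [Pi.sub_apply]
            exact sub_ne_zero.mpr (Ne.symm h2)
          exact Nat.mul_le_mul (Nat.mul_le_mul le_rfl h1) le_rfl
      _ ≤ ∑ x ∈ F, ∑ y ∈ F, wgt φ 𝒳 E x * Jt φ 𝒳 (k+1) * wgt φ 𝒳 E y := by
          apply Finset.sum_le_sum
          intro x _
          apply Finset.sum_le_sum_of_subset
          exact Finset.filter_subset _ _
      _ = Jt φ 𝒳 (k+1) * (cnt φ 𝒳 E F * cnt φ 𝒳 E F) := by
          have h2 : ∀ x ∈ F, (∑ y ∈ F, wgt φ 𝒳 E x * Jt φ 𝒳 (k+1) * wgt φ 𝒳 E y)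
              = wgt φ 𝒳 E x * (Jt φ 𝒳 (k+1) * cnt φ 𝒳 E F) := by
            intro x _
            rw [← Finset.mul_sum, cnt, mul_assoc]
          rw [Finset.sum_congr rfl h2, ← Finset.sum_mul, cnt]
          ring
  · -- bad part
    calc (∑ x ∈ F, ∑ y ∈ F.filter (fun y => ¬ ∀ j, x j ≠ y j),
          wgt φ 𝒳 E x * pk φ 𝒳 E F (k+1) x y * wgt φ 𝒳 E y)
        = ∑ x ∈ F, ∑ z ∈ F, (wgt φ 𝒳 E x * pk φ 𝒳 E F k x z) *
            (∑ y ∈ F.filter (fun y => ¬ ∀ j, x j ≠ y j), tk φ 𝒳 E z y * wgt φ 𝒳 E y) := by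
          apply Finset.sum_congr rfl
          intro x _
          have e1 : ∀ y ∈ F.filter (fun y => ¬ ∀ j, x j ≠ y j),
              wgt φ 𝒳 E x * pk φ 𝒳 E F (k+1) x y * wgt φ 𝒳 E y
              = ∑ z ∈ F, (wgt φ 𝒳 E x * pk φ 𝒳 E F k x z) * (tk φ 𝒳 E z y * wgt φ 𝒳 E y) := by
            intro y _
            rw [show pk φ 𝒳 E F (k+1) x y = ∑ z ∈ F, pk φ 𝒳 E F k x z * tk φ 𝒳 E z y from rfl]
            rw [Finset.mul_sum, Finset.sum_mul]
            exact Finset.sum_congr rfl fun z _ => by ring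
          rw [Finset.sum_congr rfl e1, Finset.sum_comm]
          exact Finset.sum_congr rfl fun z _ => (Finset.mul_sum _ _ _).symm
      _ ≤ ∑ x ∈ F, ∑ z ∈ F, (wgt φ 𝒳 E x * pk φ 𝒳 E F k x z) * (Dg φ * Kb * wgt φ 𝒳 E z) := by
          apply Finset.sum_le_sum
          intro x _
          apply Finset.sum_le_sum
          intro z _
          apply Nat.mul_le_mul le_rfl
          calc (∑ y ∈ F.filter (fun y => ¬ ∀ j, x j ≠ y j), tk φ 𝒳 E z y * wgt φ 𝒳 E y)
              ≤ ∑ y ∈ F.filter (fun y => ¬ ∀ j, x j ≠ y j), tk φ 𝒳 E z y * Kb :=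
                Finset.sum_le_sum fun y _ => Nat.mul_le_mul le_rfl (hK y)
            _ = (∑ y ∈ F.filter (fun y => ¬ ∀ j, x j ≠ y j), tk φ 𝒳 E z y) * Kb :=
                (Finset.sum_mul _ _ _).symm
            _ ≤ (Dg φ * wgt φ 𝒳 E z) * Kb :=
                Nat.mul_le_mul (bad_fiber φ 𝒳 E F hr hdeg x z) le_rfl
            _ = Dg φ * Kb * wgt φ 𝒳 E z := by ring
      _ = (Dg φ * Kb) * Bq φ 𝒳 E F k := by
          rw [Bq, Finset.mul_sum]
          apply Finset.sum_congr rfl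
          intro x _
          rw [Finset.mul_sum]
          exact Finset.sum_congr rfl fun z _ => by ring

lemma Bq_base (Kb : ℕ) (hK : ∀ y, wgt φ 𝒳 E y ≤ Kb) :
    Bq φ 𝒳 E F 0 ≤ Kb * cnt φ 𝒳 E F := by
  rw [← ck_eq_Bq]
  calc ck φ 𝒳 E F 1 = ∑ x ∈ F, wgt φ 𝒳 E x * vf φ 𝒳 E F 0 x := rfl
    _ ≤ ∑ x ∈ F, Kb * wgt φ 𝒳 E x := by
        apply Finset.sum_le_sum
        intro x _
        exact Nat.mul_le_mul (hK x) le_rfl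
    _ = Kb * cnt φ 𝒳 E F := by rw [← Finset.mul_sum, cnt]

lemma Bq_unroll (hr : 1 ≤ r) (hdeg : ∀ i, 1 ≤ (φ i).natDegree)
    (Kb : ℕ) (hK : ∀ y, wgt φ 𝒳 E y ≤ Kb) (hKX : Kb ≤ 𝒳.card) (k : ℕ) :
    Bq φ 𝒳 E F k ≤ (2 * Dg φ + 2)^k *
      (Jt φ 𝒳 k * (cnt φ 𝒳 E F * cnt φ 𝒳 E F)
        + 𝒳.card^k * (Kb * cnt φ 𝒳 E F)) := by
  induction k with
  | zero =>
      rw [pow_zero, one_mul, pow_zero, one_mul]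
      exact le_trans (Bq_base φ 𝒳 E F Kb hK) (Nat.le_add_left _ _)
  | succ k ih =>
      have hApos : 1 ≤ (2 * Dg φ + 2)^k := Nat.one_le_pow _ _ (by omega)
      have hA1 : 1 + (2 * Dg φ + 2)^k * Dg φ ≤ (2 * Dg φ + 2)^(k+1) := by
        rw [pow_succ]
        calc 1 + (2 * Dg φ + 2)^k * Dg φ
            ≤ (2 * Dg φ + 2)^k + (2 * Dg φ + 2)^k * Dg φ := add_le_add hApos le_rfl
          _ = (2 * Dg φ + 2)^k * (1 + Dg φ) := by ring
          _ ≤ (2 * Dg φ + 2)^k * (2 * Dg φ + 2) := Nat.mul_le_mul le_rfl (by omega)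
      have hA2 : (2 * Dg φ + 2)^k * Dg φ ≤ (2 * Dg φ + 2)^(k+1) := by
        rw [pow_succ]
        exact Nat.mul_le_mul le_rfl (by omega)
      have hJ : Kb * Jt φ 𝒳 k ≤ Jt φ 𝒳 (k+1) :=
        le_trans (Nat.mul_le_mul hKX le_rfl) (Jt_mono φ 𝒳 hr k)
      calc Bq φ 𝒳 E F (k+1)
          ≤ Jt φ 𝒳 (k+1) * (cnt φ 𝒳 E F * cnt φ 𝒳 E F) + (Dg φ * Kb) * Bq φ 𝒳 E F k :=
            Bq_rec φ 𝒳 E F hr hdeg Kb hK k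
        _ ≤ Jt φ 𝒳 (k+1) * (cnt φ 𝒳 E F * cnt φ 𝒳 E F) + (Dg φ * Kb) *
              ((2 * Dg φ + 2)^k * (Jt φ 𝒳 k * (cnt φ 𝒳 E F * cnt φ 𝒳 E F)
                + 𝒳.card^k * (Kb * cnt φ 𝒳 E F))) :=
            add_le_add le_rfl (Nat.mul_le_mul le_rfl ih)
        _ = Jt φ 𝒳 (k+1) * (cnt φ 𝒳 E F * cnt φ 𝒳 E F)
              + (2 * Dg φ + 2)^k * (Dg φ * ((Kb * Jt φ 𝒳 k) * (cnt φ 𝒳 E F * cnt φ 𝒳 E F)))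
              + (2 * Dg φ + 2)^k * (Dg φ * ((Kb * 𝒳.card^k) * (Kb * cnt φ 𝒳 E F))) := by
            ring
        _ ≤ Jt φ 𝒳 (k+1) * (cnt φ 𝒳 E F * cnt φ 𝒳 E F)
              + (2 * Dg φ + 2)^k * (Dg φ * (Jt φ 𝒳 (k+1) * (cnt φ 𝒳 E F * cnt φ 𝒳 E F)))
              + (2 * Dg φ + 2)^k * (Dg φ * ((𝒳.card * 𝒳.card^k) * (Kb * cnt φ 𝒳 E F))) := by
            apply add_le_add
            apply add_le_add le_rfl
            · apply Nat.mul_le_mul le_rfl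
              apply Nat.mul_le_mul le_rfl
              exact Nat.mul_le_mul hJ le_rfl
            · apply Nat.mul_le_mul le_rfl
              apply Nat.mul_le_mul le_rfl
              apply Nat.mul_le_mul _ le_rfl
              exact Nat.mul_le_mul hKX le_rfl
        _ = (1 + (2 * Dg φ + 2)^k * Dg φ) * (Jt φ 𝒳 (k+1) * (cnt φ 𝒳 E F * cnt φ 𝒳 E F))
              + ((2 * Dg φ + 2)^k * Dg φ) * (𝒳.card^(k+1) * (Kb * cnt φ 𝒳 E F)) := by
            rw [pow_succ]
            ring
        _ ≤ (2 * Dg φ + 2)^(k+1) * (Jt φ 𝒳 (k+1) * (cnt φ 𝒳 E F * cnt φ 𝒳 E F))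
              + (2 * Dg φ + 2)^(k+1) * (𝒳.card^(k+1) * (Kb * cnt φ 𝒳 E F)) :=
            add_le_add (Nat.mul_le_mul hA1 le_rfl) (Nat.mul_le_mul hA2 le_rfl)
        _ = (2 * Dg φ + 2)^(k+1) * (Jt φ 𝒳 (k+1) * (cnt φ 𝒳 E F * cnt φ 𝒳 E F)
              + 𝒳.card^(k+1) * (Kb * cnt φ 𝒳 E F)) := by
            ring

end GoodBad

section Final

variable (φ : Fin r → Polynomial ℤ) (𝒳 : Finset ℕ) (E F : Finset (Fin r → ℤ))

lemma main_key (hr : 1 ≤ r) (hdeg : ∀ i, 1 ≤ (φ i).natDegree) (s : ℕ) (hs : 2 ≤ s) :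
    (cnt φ 𝒳 E F : ℝ) ^ (2*s)
      ≤ ((2 * Dg φ + 2 : ℝ))^s * ((((φ ⟨0, hr⟩).natDegree : ℝ) + 1))
        * ((𝒳.card : ℝ)^(s-1) + (𝒳.card : ℝ) * (Jt φ 𝒳 (s-1) : ℝ))
        * (E.card : ℝ)^s * (F.card : ℝ)^s * (cnt φ 𝒳 E F : ℝ) := by
  set d1 := (φ ⟨0, hr⟩).natDegree with hd1
  set Kb := min 𝒳.card (d1 * E.card) with hKb
  have hK : ∀ y, wgt φ 𝒳 E y ≤ Kb := by
    intro y
    refine le_min (wgt_le_X φ 𝒳 E y) ?_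
    have := wgt_le_E φ 𝒳 E hr hdeg y
    rw [← hd1] at this
    exact this
  have hKX : Kb ≤ 𝒳.card := min_le_left _ _
  have hchain : (ck φ 𝒳 E F 1 : ℝ)^s ≤ (ck φ 𝒳 E F 0 : ℝ)^(s-1) * (ck φ 𝒳 E F s : ℝ) := by
    apply chain_lemma (fun k => (ck φ 𝒳 E F k : ℝ))
      (fun k => Nat.cast_nonneg _) (fun k hk => csq φ 𝒳 E F k hk) s (by omega)
  have hcb : ck φ 𝒳 E F s = Bq φ 𝒳 E F (s-1) := by
    conv_lhs => rw [show s = (s-1)+1 from by omega]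
    exact ck_eq_Bq φ 𝒳 E F (s-1)
  have hBq : (Bq φ 𝒳 E F (s-1) : ℝ)
      ≤ ((2 * Dg φ + 2 : ℝ))^(s-1) * ((Jt φ 𝒳 (s-1) : ℝ) * ((cnt φ 𝒳 E F : ℝ) * (cnt φ 𝒳 E F : ℝ))
        + (𝒳.card : ℝ)^(s-1) * ((Kb : ℝ) * (cnt φ 𝒳 E F : ℝ))) := by
    have := Bq_unroll φ 𝒳 E F hr hdeg Kb hK hKX (s-1)
    have h2 : ((Bq φ 𝒳 E F (s-1) : ℕ) : ℝ)
        ≤ (((2 * Dg φ + 2)^(s-1) * (Jt φ 𝒳 (s-1) * (cnt φ 𝒳 E F * cnt φ 𝒳 E F)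
          + 𝒳.card^(s-1) * (Kb * cnt φ 𝒳 E F)) : ℕ) : ℝ) := Nat.cast_le.mpr this
    push_cast at h2
    exact h2
  have hNle : (cnt φ 𝒳 E F : ℝ) ≤ (𝒳.card : ℝ) * (E.card : ℝ) := by
    exact_mod_cast Nat.cast_le.mpr (cnt_le φ 𝒳 E F)
  have hKble : (Kb : ℝ) ≤ (d1 : ℝ) * (E.card : ℝ) := by
    exact_mod_cast Nat.cast_le.mpr (min_le_right _ _)
  -- abbreviations
  set N := (cnt φ 𝒳 E F : ℝ) with hN
  set X := (𝒳.card : ℝ) with hX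
  set J := (Jt φ 𝒳 (s-1) : ℝ) with hJ
  set Ec := (E.card : ℝ) with hEc
  set Fc := (F.card : ℝ) with hFc
  have hNnn : 0 ≤ N := Nat.cast_nonneg _
  have hXnn : 0 ≤ X := Nat.cast_nonneg _
  have hJnn : 0 ≤ J := Nat.cast_nonneg _
  have hEnn : 0 ≤ Ec := Nat.cast_nonneg _
  have hFnn : 0 ≤ Fc := Nat.cast_nonneg _
  have hKnn : 0 ≤ (Kb : ℝ) := Nat.cast_nonneg _
  have hd1nn : (0:ℝ) ≤ d1 := Nat.cast_nonneg _
  -- inner bound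
  have hinner : J * (N * N) + X^(s-1) * ((Kb:ℝ) * N)
      ≤ ((d1:ℝ)+1) * ((X^(s-1) + X * J) * (Ec * N)) := by
    have t1 : J * (N * N) ≤ (X * J) * (Ec * N) := by
      calc J * (N * N) = (J * N) * N := by ring
        _ ≤ (J * N) * (X * Ec) := by
            apply mul_le_mul_of_nonneg_left hNle (by positivity)
        _ = (X * J) * (Ec * N) := by ring
    have t2 : X^(s-1) * ((Kb:ℝ) * N) ≤ (d1:ℝ) * (X^(s-1) * (Ec * N)) := by
      calc X^(s-1) * ((Kb:ℝ) * N) ≤ X^(s-1) * (((d1:ℝ) * Ec) * N) := by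
            apply mul_le_mul_of_nonneg_left (mul_le_mul_of_nonneg_right hKble hNnn) (by positivity)
        _ = (d1:ℝ) * (X^(s-1) * (Ec * N)) := by ring
    calc J * (N * N) + X^(s-1) * ((Kb:ℝ) * N)
        ≤ (X * J) * (Ec * N) + (d1:ℝ) * (X^(s-1) * (Ec * N)) := add_le_add t1 t2
      _ ≤ ((d1:ℝ)+1) * ((X * J) * (Ec * N)) + ((d1:ℝ)+1) * (X^(s-1) * (Ec * N)) := by
          apply add_le_add
          · apply le_mul_of_one_le_left (by positivity)
            linarith
          · apply mul_le_mul_of_nonneg_right (by linarith) (by positivity)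
      _ = ((d1:ℝ)+1) * ((X^(s-1) + X * J) * (Ec * N)) := by ring
  -- the big chain
  have hck0 : (ck φ 𝒳 E F 0 : ℝ) = Ec := by rw [hEc]; norm_cast
  have hA : (0:ℝ) ≤ ((2 * Dg φ + 2 : ℝ))^(s-1) := by positivity
  calc N ^ (2*s) = (N^2)^s := by rw [← pow_mul, mul_comm]
    _ ≤ ((Fc) * (ck φ 𝒳 E F 1 : ℝ))^s := by
        apply pow_le_pow_left₀ (by positivity)
        exact cnt_sq_le φ 𝒳 E F
    _ = Fc^s * (ck φ 𝒳 E F 1 : ℝ)^s := mul_pow _ _ _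
    _ ≤ Fc^s * ((ck φ 𝒳 E F 0 : ℝ)^(s-1) * (ck φ 𝒳 E F s : ℝ)) := by
        apply mul_le_mul_of_nonneg_left hchain (by positivity)
    _ = Fc^s * Ec^(s-1) * (Bq φ 𝒳 E F (s-1) : ℝ) := by
        rw [hck0, hcb]; ring
    _ ≤ Fc^s * Ec^(s-1) * (((2 * Dg φ + 2 : ℝ))^(s-1) * (J * (N * N) + X^(s-1) * ((Kb:ℝ) * N))) := by
        apply mul_le_mul_of_nonneg_left hBq (by positivity)
    _ ≤ Fc^s * Ec^(s-1) * (((2 * Dg φ + 2 : ℝ))^(s-1) * (((d1:ℝ)+1) * ((X^(s-1) + X * J) * (Ec * N)))) := by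
        apply mul_le_mul_of_nonneg_left (mul_le_mul_of_nonneg_left hinner hA) (by positivity)
    _ = (((2 * Dg φ + 2 : ℝ))^(s-1) * ((d1:ℝ)+1)) * (X^(s-1) + X * J) * (Ec^(s-1) * Ec) * Fc^s * N := by
        ring
    _ ≤ ((2 * Dg φ + 2 : ℝ))^s * ((d1:ℝ)+1) * (X^(s-1) + X * J) * Ec^s * Fc^s * N := by
        have hEs : Ec^(s-1) * Ec = Ec^s := by
          rw [← pow_succ]
          congr 1
          omega
        rw [hEs]
        have hAs : ((2 * Dg φ + 2 : ℝ))^(s-1) ≤ ((2 * Dg φ + 2 : ℝ))^s := by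
          apply pow_le_pow_right₀ ?_ (by omega)
          have : (0:ℝ) ≤ (Dg φ : ℝ) := Nat.cast_nonneg _
          linarith
        apply mul_le_mul_of_nonneg_right _ hNnn
        apply mul_le_mul_of_nonneg_right _ (by positivity)
        apply mul_le_mul_of_nonneg_right _ (by positivity)
        apply mul_le_mul_of_nonneg_right _ (by positivity)
        exact mul_le_mul_of_nonneg_right hAs (by positivity)

end Final

end RWTProof

/-- **Theorem 1 (restricted weak-type form).** For a separated system
`γ = (φ₁, …, φ_r)` which is not a single linear polynomial, and `s ≥ 2`,
there exists `C > 0` (depending only on `s` and `γ`) such that for every finite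
`𝒳 ⊆ ℕ` and all nonempty finite `E, F ⊆ ℤ^r`,
`#{(n,x) ∈ 𝒳 × F : x + γ(n) ∈ E}^{2s-1} ≤ C (|𝒳|^{s-1} + |𝒳|·J̃_{s-1}^γ(𝒳)) |E|^s |F|^s`,
where `J̃_{s-1}^γ(𝒳)` is the sup over `a ∈ ℤ^r` with all coordinates nonzero of the
number of `(m,n) ∈ 𝒳^{s-1} × 𝒳^{s-1}` with `∑ᵢ (φ_j(nᵢ) - φ_j(mᵢ)) = a_j` for all `j`. -/
theorem theorem1_restricted_weak_type {r : ℕ} (hr : 1 ≤ r)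
    (φ : Fin r → Polynomial ℤ)
    (hdeg : ∀ i, 1 ≤ (φ i).natDegree)
    (hsep : StrictMono fun i => (φ i).natDegree)
    (hnl : r = 1 → ∀ i, 2 ≤ (φ i).natDegree)
    (s : ℕ) (hs : 2 ≤ s) :
    ∃ C > (0 : ℝ), ∀ (𝒳 : Finset ℕ) (E F : Finset (Fin r → ℤ)),
      E.Nonempty → F.Nonempty →
      (((𝒳 ×ˢ F).filter
          (fun p => (fun i => p.2 i + (φ i).eval (p.1 : ℤ)) ∈ E)).card : ℝ) ^ (2 * s - 1)
        ≤ C * ((𝒳.card : ℝ) ^ (s - 1) + (𝒳.card : ℝ) *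
            ((sSup {m : ℕ | ∃ a : Fin r → ℤ, (∀ j, a j ≠ 0) ∧
              m = (((Fintype.piFinset fun _ : Fin (s - 1) => 𝒳) ×ˢ
                    (Fintype.piFinset fun _ : Fin (s - 1) => 𝒳)).filter
                  (fun q => ∀ j, ∑ i, ((φ j).eval (q.2 i : ℤ) - (φ j).eval (q.1 i : ℤ)) = a j)).card}
              : ℕ) : ℝ))
          * (E.card : ℝ) ^ s * (F.card : ℝ) ^ s := by
  classical
  refine ⟨((2 * RWTProof.Dg φ + 2 : ℝ))^s * (((φ ⟨0, hr⟩).natDegree : ℝ) + 1), by positivity, ?_⟩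
  intro 𝒳 E F hE hF
  have h2s : 2*s-1 ≠ 0 := by omega
  have h2s' : 2*s-1+1 = 2*s := by omega
  have hJrw : (sSup {m : ℕ | ∃ a : Fin r → ℤ, (∀ j, a j ≠ 0) ∧
      m = (((Fintype.piFinset fun _ : Fin (s - 1) => 𝒳) ×ˢ
            (Fintype.piFinset fun _ : Fin (s - 1) => 𝒳)).filter
          (fun q => ∀ j, ∑ i, ((φ j).eval (q.2 i : ℤ) - (φ j).eval (q.1 i : ℤ)) = a j)).card}
      : ℕ) = RWTProof.Jt φ 𝒳 (s-1) := rfl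
  rw [hJrw, RWTProof.cnt_eq_card φ 𝒳 E F]
  by_cases hN0 : RWTProof.cnt φ 𝒳 E F = 0
  · rw [hN0]
    rw [Nat.cast_zero, zero_pow h2s]
    positivity
  · have hkey := RWTProof.main_key φ 𝒳 E F hr hdeg s hs
    have hNpos : (0:ℝ) < (RWTProof.cnt φ 𝒳 E F : ℝ) := by
      exact_mod_cast Nat.pos_of_ne_zero hN0
    apply le_of_mul_le_mul_right _ hNpos
    have hpow : (RWTProof.cnt φ 𝒳 E F : ℝ)^(2*s-1) * (RWTProof.cnt φ 𝒳 E F : ℝ)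
        = (RWTProof.cnt φ 𝒳 E F : ℝ)^(2*s) := by
      rw [← pow_succ, h2s']
    rw [hpow]
    refine le_trans hkey (le_of_eq ?_)
    ring
end

section
/- (Eliminant polynomial; Lemma 2 of Parsell–Wooley as used here) Let γ = (φ_1, …, φ_r) be a separated system of r polynomials, and for s ∈ ℕ and 1 ≤ i ≤ r define σ_{i,s}(X_1, …, X_s) := ∑_{j=1}^s φ_i(X_j) ∈ ℤ[X_1, …, X_s]. Then there exists a nonzero polynomial Q ∈ ℤ[T_1, …, T_r] such that Q(σ_{1,r−1}, …, σ_{r,r−1}) is identically zero as a polynomial in ℤ[X_1, …, X_{r−1}], but Q(σ_{1,r}, …, σ_{r,r}) is not identically zero as a polynomial in ℤ[X_1, …, X_r]. -/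
open MvPolynomial Finset

lemma PW.coeff_prod_aeval_X {R : Type*} [CommSemiring R] {n : ℕ} (p : Fin n → Polynomial R)
    (m : Fin n →₀ ℕ) :
    MvPolynomial.coeff m (∏ i, Polynomial.aeval (MvPolynomial.X i : MvPolynomial (Fin n) R) (p i))
      = ∏ i, (p i).coeff (m i) := by
  classical
  set N : ℕ := (∑ i, ((p i).natDegree + m i)) + 1 with hN
  have hdN : ∀ i, (p i).natDegree < N := by
    intro i
    have : (p i).natDegree ≤ ∑ i, ((p i).natDegree + m i) :=
      le_trans (Nat.le_add_right _ _) (Finset.single_le_sum (f := fun i => (p i).natDegree + m i)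
        (fun _ _ => Nat.zero_le _) (mem_univ i))
    omega
  have hmN : ∀ i, m i < N := by
    intro i
    have : m i ≤ ∑ i, ((p i).natDegree + m i) :=
      le_trans (Nat.le_add_left _ _) (Finset.single_le_sum (f := fun i => (p i).natDegree + m i)
        (fun _ _ => Nat.zero_le _) (mem_univ i))
    omega
  have step1 : ∀ i, Polynomial.aeval (MvPolynomial.X i : MvPolynomial (Fin n) R) (p i)
      = ∑ k ∈ Finset.range N, MvPolynomial.C ((p i).coeff k) * (MvPolynomial.X i) ^ k := by
    intro i
    rw [Polynomial.aeval_def,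
      Polynomial.eval₂_eq_sum_range' (algebraMap R (MvPolynomial (Fin n) R)) (hdN i),
      MvPolynomial.algebraMap_eq]
  rw [Finset.prod_congr rfl fun i _ => step1 i, Finset.prod_univ_sum]
  have step2 : ∀ t : Fin n → ℕ,
      (∏ i, MvPolynomial.C ((p i).coeff (t i)) * (MvPolynomial.X i : MvPolynomial (Fin n) R) ^ (t i))
        = monomial (Finsupp.equivFunOnFinite.symm t) (∏ i, (p i).coeff (t i)) := by
    intro t
    rw [Finset.prod_mul_distrib, ← map_prod]
    have : (∏ i, (MvPolynomial.X i : MvPolynomial (Fin n) R) ^ (t i))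
        = monomial (Finsupp.equivFunOnFinite.symm t) 1 := by
      rw [← prod_X_pow_eq_monomial]
      refine (Finset.prod_subset (Finset.subset_univ _) ?_).symm
      intro i _ hins
      have h0 : (Finsupp.equivFunOnFinite.symm t) i = 0 := by
        by_contra h
        exact hins (Finsupp.mem_support_iff.mpr h)
      have ht0 : t i = 0 := h0
      simp [ht0]
    rw [this, C_mul_monomial, mul_one]
  rw [Finset.sum_congr rfl fun t _ => step2 t, MvPolynomial.coeff_sum]
  rw [Finset.sum_congr rfl fun t _ => MvPolynomial.coeff_monomial m _ _]
  have hmem : (fun i => m i) ∈ Fintype.piFinset (fun _ : Fin n => Finset.range N) := by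
    simp only [Fintype.mem_piFinset, Finset.mem_range]
    exact hmN
  rw [Finset.sum_eq_single_of_mem (fun i => m i) hmem]
  · rw [if_pos (Finsupp.equivFunOnFinite_symm_coe m)]
  · intro t _ ht
    rw [if_neg]
    intro h
    apply ht
    funext i
    have := DFunLike.congr_fun h i
    simpa using this

lemma PW.sum_sub_single {n : ℕ} (m : Fin n →₀ ℕ) (i : Fin n) (hi : m i ≠ 0) :
    ((m - Finsupp.single i 1).sum fun _ e => e) + 1 = m.sum fun _ e => e := by
  classical
  have hdecomp : (m - Finsupp.single i 1) + Finsupp.single i 1 = m := by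
    ext j
    simp only [Finsupp.add_apply, Finsupp.tsub_apply]
    rcases eq_or_ne j i with rfl | hne
    · simp only [Finsupp.single_eq_same]
      omega
    · simp [Finsupp.single_eq_of_ne' (Ne.symm hne)]
  calc ((m - Finsupp.single i 1).sum fun _ e => e) + 1
      = ((m - Finsupp.single i 1).sum fun _ e => e)
        + ((Finsupp.single i 1).sum fun _ e => e) := by
        rw [Finsupp.sum_single_index]; rfl
    _ = ((m - Finsupp.single i 1) + Finsupp.single i 1).sum fun _ e => e := by
        rw [Finsupp.sum_add_index] <;> simp
    _ = m.sum fun _ e => e := by rw [hdecomp]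

lemma PW.pderiv_eq_sum {R : Type*} [CommRing R] {n : ℕ} (Q : MvPolynomial (Fin n) R) (i : Fin n) :
    pderiv i Q = ∑ m ∈ Q.support,
      monomial (m - Finsupp.single i 1) (MvPolynomial.coeff m Q * (m i : R)) := by
  conv_lhs => rw [Q.as_sum]
  rw [map_sum]
  exact Finset.sum_congr rfl fun m _ => pderiv_monomial

lemma PW.totalDegree_pderiv_lt {R : Type*} [CommRing R] {n : ℕ}
    (Q : MvPolynomial (Fin n) R) (hQ : 1 ≤ Q.totalDegree) (i : Fin n) :
    (pderiv i Q).totalDegree < Q.totalDegree := by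
  classical
  rw [PW.pderiv_eq_sum Q i]
  refine lt_of_le_of_lt (totalDegree_finset_sum _ _) ?_
  rw [Finset.sup_lt_iff (by rw [bot_eq_zero]; omega : (⊥ : ℕ) < Q.totalDegree)]
  intro m hm
  rcases eq_or_ne (m i) 0 with h0 | h0
  · rw [h0]
    simp only [Nat.cast_zero, mul_zero, map_zero]
    rw [totalDegree_zero]
    omega
  · refine lt_of_le_of_lt (totalDegree_monomial_le _ _) ?_
    have h1 := PW.sum_sub_single m i h0
    have h2 : (m.sum fun _ e => e) ≤ Q.totalDegree := le_totalDegree hm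
    have : ((m - Finsupp.single i 1).sum fun _ e => e)
        = (m - Finsupp.single i 1).sum fun _ => id := rfl
    omega

lemma PW.pderiv_ne_zero {F : Type*} [Field F] [CharZero F] {n : ℕ}
    (Q : MvPolynomial (Fin n) F) {m : Fin n →₀ ℕ} (hm : m ∈ Q.support)
    {i : Fin n} (hi : m i ≠ 0) : pderiv i Q ≠ 0 := by
  classical
  intro h
  have hc : MvPolynomial.coeff (m - Finsupp.single i 1) (pderiv i Q) = 0 := by rw [h]; simp
  rw [PW.pderiv_eq_sum Q i, MvPolynomial.coeff_sum] at hc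
  rw [Finset.sum_eq_single_of_mem m hm] at hc
  · rw [MvPolynomial.coeff_monomial, if_pos rfl] at hc
    have : MvPolynomial.coeff m Q ≠ 0 := MvPolynomial.mem_support_iff.mp hm
    have hmi : (m i : F) ≠ 0 := Nat.cast_ne_zero.mpr hi
    exact (mul_ne_zero this hmi) hc
  · intro m' hm' hne
    rw [MvPolynomial.coeff_monomial]
    rcases eq_or_ne (m' i) 0 with h0 | h0
    · rw [h0]; simp
    · rw [if_neg]
      intro heq
      apply hne
      ext j
      have := DFunLike.congr_fun heq j
      simp only [Finsupp.tsub_apply] at this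
      rcases eq_or_ne j i with rfl | hjne
      · simp only [Finsupp.single_eq_same] at this
        omega
      · simpa [Finsupp.single_eq_of_ne' (Ne.symm hjne)] using this

lemma PW.pderiv_aeval {R : Type*} [CommRing R] {n s : ℕ}
    (f : Fin n → MvPolynomial (Fin s) R) (j : Fin s) (Q : MvPolynomial (Fin n) R) :
    pderiv j (aeval f Q) = ∑ i, aeval f (pderiv i Q) * pderiv j (f i) := by
  classical
  induction Q using MvPolynomial.induction_on with
  | C a => simp
  | add u v hu hv =>
      simp only [map_add, hu, hv, add_mul, ← Finset.sum_add_distrib]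
  | mul_X u i hu =>
      simp only [map_mul, aeval_X, pderiv_mul, hu, Derivation.leibniz, pderiv_X,
        smul_eq_mul, map_add, Pi.single_apply, mul_ite, mul_one, mul_zero,
        apply_ite (aeval f), map_one, map_zero, add_mul, Finset.sum_add_distrib,
        ite_mul, zero_mul]
      rw [Finset.sum_ite_eq Finset.univ i (fun x => aeval f u * pderiv j (f x))]
      simp only [Finset.mem_univ, if_pos]
      rw [Finset.mul_sum]
      congr 1
      exact Finset.sum_congr rfl fun x _ => by ring

lemma PW.det_aeval_ne_zero {F : Type*} [CommRing F] [IsDomain F] {n : ℕ}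
    (p : Fin n → Polynomial F) (hp : ∀ i, p i ≠ 0)
    (hs : StrictMono fun i => (p i).natDegree) :
    (Matrix.of fun i j =>
      Polynomial.aeval (MvPolynomial.X j : MvPolynomial (Fin n) F) (p i)).det ≠ 0 := by
  classical
  set m : Fin n →₀ ℕ := Finsupp.equivFunOnFinite.symm (fun j => (p j).natDegree) with hm
  have hmj : ∀ j, m j = (p j).natDegree := fun j => rfl
  intro hdet
  have hc : MvPolynomial.coeff m
      (Matrix.of fun i j =>
        Polynomial.aeval (MvPolynomial.X j : MvPolynomial (Fin n) F) (p i)).det = 0 := by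
    rw [hdet]; simp
  rw [Matrix.det_apply, MvPolynomial.coeff_sum] at hc
  have hterm : ∀ π : Equiv.Perm (Fin n),
      MvPolynomial.coeff m (Equiv.Perm.sign π •
        ∏ j, (Matrix.of fun i j =>
          Polynomial.aeval (MvPolynomial.X j : MvPolynomial (Fin n) F) (p i)) (π j) j)
      = Equiv.Perm.sign π • ∏ j, (p (π j)).coeff (m j) := by
    intro π
    rw [MvPolynomial.coeff_smul]
    congr 1
    exact PW.coeff_prod_aeval_X (fun j => p (π j)) m
  rw [Finset.sum_congr rfl fun π _ => hterm π] at hc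
  rw [Finset.sum_eq_single (1 : Equiv.Perm (Fin n))] at hc
  · simp only [Equiv.Perm.sign_one, one_smul, Equiv.Perm.one_apply] at hc
    have : ∀ j, (p j).coeff (m j) ≠ 0 := by
      intro j
      rw [hmj]
      exact fun h => (hp j) (Polynomial.leadingCoeff_eq_zero.mp h)
    exact Finset.prod_ne_zero_iff.mpr (fun j _ => this j) hc
  · intro π _ hπ
    -- find j moved by π with π j < j
    have hex : ∃ j, π j ≠ j := by
      by_contra h
      push_neg at h
      exact hπ (Equiv.ext h)
    set s : Finset (Fin n) := Finset.univ.filter (fun j => π j ≠ j) with hsdef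
    have hsne : s.Nonempty := by
      obtain ⟨j, hj⟩ := hex
      exact ⟨j, by simp [hsdef, hj]⟩
    obtain ⟨j, hjs, hjmax⟩ := Finset.exists_max_image s id hsne
    have hmoved : π j ≠ j := (Finset.mem_filter.mp hjs).2
    have hπjs : π j ∈ s := by
      simp only [hsdef, Finset.mem_filter, Finset.mem_univ, true_and]
      intro h
      exact hmoved (π.injective h)
    have hle : π j ≤ j := hjmax _ hπjs
    have hlt : π j < j := lt_of_le_of_ne hle hmoved
    have hdlt : (p (π j)).natDegree < (p j).natDegree := hs hlt
    have : (p (π j)).coeff (m j) = 0 :=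
      Polynomial.coeff_eq_zero_of_natDegree_lt (by rw [hmj]; exact hdlt)
    rw [Finset.prod_eq_zero (Finset.mem_univ j) this, smul_zero]
  · intro h
    exact absurd (Finset.mem_univ 1) h

lemma PW.eq_C_of_totalDegree_eq_zero {R : Type*} [CommRing R] {n : ℕ}
    {Q : MvPolynomial (Fin n) R} (h : Q.totalDegree = 0) :
    Q = MvPolynomial.C (MvPolynomial.coeff 0 Q) := by
  classical
  have hsupp : Q.support ⊆ {0} := by
    intro m hm
    rw [Finset.mem_singleton]
    ext j
    exact (MvPolynomial.totalDegree_eq_zero_iff _ Q).mp h m hm j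
  have := Q.as_sum
  rw [Finset.sum_subset hsupp (fun m _ hm => by
    rw [MvPolynomial.notMem_support_iff.mp hm, map_zero])] at this
  rw [Finset.sum_singleton] at this
  rw [MvPolynomial.C_apply]
  exact this

lemma PW.aeval_sigma_injective {F : Type*} [Field F] [CharZero F] {r : ℕ}
    (p : Fin r → Polynomial F)
    (h1 : ∀ i, 1 ≤ (p i).natDegree)
    (hs : StrictMono fun i => (p i).natDegree)
    (Q : MvPolynomial (Fin r) F)
    (h0 : aeval (fun i => ∑ j : Fin r,
      Polynomial.aeval (MvPolynomial.X j : MvPolynomial (Fin r) F) (p i)) Q = 0) :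
    Q = 0 := by
  classical
  set σ : Fin r → MvPolynomial (Fin r) F :=
    fun i => ∑ j : Fin r, Polynomial.aeval (MvPolynomial.X j) (p i) with hσ
  suffices H : ∀ N, ∀ Q : MvPolynomial (Fin r) F, Q.totalDegree ≤ N → aeval σ Q = 0 → Q = 0 by
    exact H Q.totalDegree Q le_rfl h0
  clear h0 Q
  intro N
  induction N using Nat.strong_induction_on with
  | _ N ih =>
    intro Q hdeg h0
    by_contra hQ
    rcases Nat.eq_zero_or_pos Q.totalDegree with htd | htd
    · have hC := PW.eq_C_of_totalDegree_eq_zero htd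
      rw [hC, aeval_C] at h0
      have : MvPolynomial.coeff 0 Q = 0 := by
        have := (algebraMap F (MvPolynomial (Fin r) F)).injective
          (by rw [h0, map_zero] : algebraMap F (MvPolynomial (Fin r) F) _ = algebraMap F _ 0)
        exact this
      exact hQ (by rw [hC, this, map_zero])
    -- find a variable occurring in Q
    obtain ⟨m, hm, hmsum⟩ : ∃ m ∈ Q.support, (m.sum fun _ e => e) = Q.totalDegree := by
      obtain ⟨m, hm, h⟩ := Finset.exists_mem_eq_sup Q.support
        (MvPolynomial.support_nonempty.mpr hQ) (fun m => m.sum fun _ e => e)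
      exact ⟨m, hm, h.symm⟩
    have hmne : ∃ i, m i ≠ 0 := by
      by_contra h
      push_neg at h
      have : (m.sum fun _ e => e) = 0 := by
        rw [Finsupp.sum_fintype _ _ (fun _ => rfl)]
        exact Finset.sum_eq_zero fun i _ => h i
      omega
    obtain ⟨i₀, hi₀⟩ := hmne
    set v : Fin r → MvPolynomial (Fin r) F := fun i => aeval σ (pderiv i Q) with hv
    have hvd : ∀ i, pderiv i Q ≠ 0 → v i ≠ 0 := by
      intro i hne hvz
      have hlt : (pderiv i Q).totalDegree < N :=
        lt_of_lt_of_le (PW.totalDegree_pderiv_lt Q htd i) hdeg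
      exact hne (ih _ hlt _ le_rfl hvz)
    have hv0 : v i₀ ≠ 0 := hvd i₀ (PW.pderiv_ne_zero Q hm hi₀)
    -- chain rule
    have hps : ∀ i j, pderiv j (σ i)
        = Polynomial.aeval (MvPolynomial.X j : MvPolynomial (Fin r) F)
            (Polynomial.derivative (p i)) := by
      intro i j
      rw [hσ]
      simp only [map_sum, Derivation.comp_aeval_eq, pderiv_X, smul_eq_mul,
        Pi.single_apply, mul_ite, mul_one, mul_zero]
      simp
    set M : Matrix (Fin r) (Fin r) (MvPolynomial (Fin r) F) :=
      Matrix.of fun i j => Polynomial.aeval (MvPolynomial.X j)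
        (Polynomial.derivative (p i)) with hM
    have hvecMul : Matrix.vecMul v M = 0 := by
      funext j
      have hcr := PW.pderiv_aeval σ j Q
      rw [h0, map_zero] at hcr
      simp only [hps] at hcr
      simp only [Matrix.vecMul, dotProduct, hM, Matrix.of_apply, hv, Pi.zero_apply]
      exact hcr.symm
    have hdet0 : M.det = 0 := by
      have h2 := congrArg (fun w => Matrix.vecMul w M.adjugate) hvecMul
      simp only [Matrix.vecMul_vecMul, Matrix.zero_vecMul] at h2
      rw [Matrix.mul_adjugate] at h2
      have h3 := congrFun h2 i₀
      simp only [Matrix.vecMul, dotProduct, Matrix.smul_apply, Matrix.one_apply,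
        smul_eq_mul, mul_ite, mul_one, mul_zero, Pi.zero_apply, Finset.sum_ite_eq'] at h3
      simp only [Finset.mem_univ, if_pos] at h3
      rcases mul_eq_zero.mp h3 with h | h
      · exact absurd h hv0
      · exact h
    have hder : ∀ i, Polynomial.derivative (p i) ≠ 0 ∧
        (Polynomial.derivative (p i)).natDegree = (p i).natDegree - 1 := by
      intro i
      have hd := Polynomial.degree_derivative_eq (p i) (h1 i)
      constructor
      · intro h
        rw [h, Polynomial.degree_zero] at hd
        exact absurd hd.symm (by simp)
      · exact Polynomial.natDegree_eq_of_degree_eq_some hd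
    refine PW.det_aeval_ne_zero (fun i => Polynomial.derivative (p i))
      (fun i => (hder i).1) ?_ hdet0
    intro a b hab
    have hda := (hder a).2
    have hdb := (hder b).2
    have h1a := h1 a
    have hmono : (p a).natDegree < (p b).natDegree := hs hab
    simp only [hda, hdb]
    omega

lemma PW.apply_le_sum {n : ℕ} (s : Fin n →₀ ℕ) (i : Fin n) : s i ≤ s.sum fun _ e => e := by
  rcases eq_or_ne (s i) 0 with h | h
  · omega
  · rw [Finsupp.sum]
    exact Finset.single_le_sum (f := fun j => s j) (fun _ _ => Nat.zero_le _)
      (Finsupp.mem_support_iff.mpr h)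

noncomputable instance PW.fintypeBounded (n Nb : ℕ) :
    Fintype {s : Fin n →₀ ℕ | (s.sum fun _ e => e) ≤ Nb} := by
  have hinj : Function.Injective
      (fun s : {s : Fin n →₀ ℕ | (s.sum fun _ e => e) ≤ Nb} =>
        (fun i => (⟨s.1 i, by
          have h1 := PW.apply_le_sum s.1 i
          have h2 := s.2
          simp only [Set.mem_setOf_eq] at h2
          omega⟩ : Fin (Nb+1))) : _ → (Fin n → Fin (Nb + 1))) := by
    intro s t h
    apply Subtype.ext
    ext j
    exact congrArg Fin.val (congrFun h j)
  have : Finite {s : Fin n →₀ ℕ | (s.sum fun _ e => e) ≤ Nb} :=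
    Finite.of_injective _ hinj
  exact Fintype.ofFinite _

lemma PW.card_bounded_le (n Nb : ℕ) :
    Fintype.card {s : Fin n →₀ ℕ | (s.sum fun _ e => e) ≤ Nb} ≤ (Nb + 1) ^ n := by
  have hinj : Function.Injective
      (fun s : {s : Fin n →₀ ℕ | (s.sum fun _ e => e) ≤ Nb} =>
        (fun i => (⟨s.1 i, by
          have h1 := PW.apply_le_sum s.1 i
          have h2 := s.2
          simp only [Set.mem_setOf_eq] at h2
          omega⟩ : Fin (Nb+1))) : _ → (Fin n → Fin (Nb + 1))) := by
    intro s t h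
    apply Subtype.ext
    ext j
    exact congrArg Fin.val (congrFun h j)
  calc Fintype.card {s : Fin n →₀ ℕ | (s.sum fun _ e => e) ≤ Nb}
      ≤ Fintype.card (Fin n → Fin (Nb + 1)) := Fintype.card_le_of_injective _ hinj
    _ = (Nb + 1) ^ n := by simp

lemma PW.card_bounded_ge (n M0 : ℕ) :
    (M0 + 1) ^ n ≤ Fintype.card {s : Fin n →₀ ℕ | (s.sum fun _ e => e) ≤ n * M0} := by
  have hinj : Function.Injective
      (fun g : Fin n → Fin (M0 + 1) =>
        (⟨Finsupp.equivFunOnFinite.symm (fun i => (g i : ℕ)), by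
          simp only [Set.mem_setOf_eq]
          rw [Finsupp.sum_fintype _ _ (fun _ => rfl)]
          calc (∑ i, (Finsupp.equivFunOnFinite.symm (fun i => (g i : ℕ))) i)
              = ∑ i, (g i : ℕ) := by rfl
            _ ≤ ∑ _i : Fin n, M0 := Finset.sum_le_sum (fun i _ => by omega)
            _ = n * M0 := by simp [Finset.sum_const, mul_comm]⟩ :
          {s : Fin n →₀ ℕ | (s.sum fun _ e => e) ≤ n * M0})) := by
    intro g g' h
    funext i
    have := congrArg Subtype.val h
    have h2 := DFunLike.congr_fun this i
    change (g i : ℕ) = (g' i : ℕ) at h2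
    exact Fin.ext h2
  calc (M0 + 1) ^ n = Fintype.card (Fin n → Fin (M0 + 1)) := by simp
    _ ≤ _ := Fintype.card_le_of_injective _ hinj

lemma PW.totalDegree_aeval_le {n k D : ℕ} (f : Fin n → MvPolynomial (Fin k) ℤ)
    (hf : ∀ i, (f i).totalDegree ≤ D) (Q : MvPolynomial (Fin n) ℤ) :
    (aeval f Q).totalDegree ≤ Q.totalDegree * D := by
  classical
  have hrw : aeval f Q = ∑ m ∈ Q.support,
      MvPolynomial.C (MvPolynomial.coeff m Q) * (m.prod fun i e => f i ^ e) := by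
    conv_lhs => rw [Q.as_sum]
    rw [map_sum]
    refine Finset.sum_congr rfl fun m _ => ?_
    rw [aeval_monomial]
    rfl
  rw [hrw]
  refine le_trans (totalDegree_finset_sum _ _) ?_
  rw [Finset.sup_le_iff]
  intro m hm
  refine le_trans (totalDegree_mul _ _) ?_
  rw [MvPolynomial.totalDegree_C, zero_add]
  refine le_trans (totalDegree_finset_prod _ _) ?_
  calc (∑ i ∈ m.support, (f i ^ m i).totalDegree)
      ≤ ∑ i ∈ m.support, m i * D := by
        refine Finset.sum_le_sum fun i _ => ?_
        exact le_trans (totalDegree_pow _ _) (Nat.mul_le_mul_left _ (hf i))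
    _ = (m.sum fun _ e => e) * D := by rw [Finsupp.sum, Finset.sum_mul]
    _ ≤ Q.totalDegree * D := Nat.mul_le_mul_right _ (le_totalDegree hm)

lemma PW.exists_annihilator {r k : ℕ} (hkr : k < r) (f : Fin r → MvPolynomial (Fin k) ℤ) :
    ∃ Q : MvPolynomial (Fin r) ℤ, Q ≠ 0 ∧ aeval f Q = 0 := by
  classical
  set D : ℕ := 1 + ∑ i, (f i).totalDegree with hD
  have hD1 : 1 ≤ D := Nat.le_add_right 1 _
  have hfD : ∀ i, (f i).totalDegree ≤ D := by
    intro i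
    have : (f i).totalDegree ≤ ∑ i, (f i).totalDegree :=
      Finset.single_le_sum (f := fun i => (f i).totalDegree)
        (fun _ _ => Nat.zero_le _) (Finset.mem_univ i)
    omega
  set B : ℕ := r * D + 1 with hB
  set M0 : ℕ := B ^ r with hM0
  set N : ℕ := r * M0 with hN
  have hr1 : 1 ≤ r := by omega
  have hB2 : 2 ≤ B := by
    have : 1 ≤ r * D := Nat.one_le_iff_ne_zero.mpr (by positivity)
    omega
  have hM01 : 1 ≤ M0 := Nat.one_le_pow _ _ (by omega)
  -- numeric inequality
  have hcard : (N * D + 1) ^ k < (M0 + 1) ^ r := by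
    have h1 : N * D + 1 ≤ B ^ (r + 1) := by
      calc N * D + 1 = r * M0 * D + 1 := rfl
        _ ≤ M0 * (r * D) + M0 := by
            have : r * M0 * D = M0 * (r * D) := by ring
            omega
        _ = M0 * B := by rw [hB]; ring
        _ = B ^ (r + 1) := by rw [hM0, pow_succ, mul_comm] -- B^r * B
    have h2 : (N * D + 1) ^ k ≤ (B ^ (r + 1)) ^ (r - 1) := by
      calc (N * D + 1) ^ k ≤ (B ^ (r + 1)) ^ k := Nat.pow_le_pow_left h1 k
        _ ≤ (B ^ (r + 1)) ^ (r - 1) :=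
            Nat.pow_le_pow_right (Nat.one_le_pow _ _ (by omega)) (by omega)
    have h3 : (B ^ (r + 1)) ^ (r - 1) = B ^ ((r + 1) * (r - 1)) := by rw [← pow_mul]
    have h4 : (r + 1) * (r - 1) < r * r := by
      cases r with
      | zero => omega
      | succ n =>
        rw [Nat.add_sub_cancel]
        nlinarith
    have h5 : B ^ ((r + 1) * (r - 1)) < B ^ (r * r) := Nat.pow_lt_pow_right (by omega) h4
    have h6 : B ^ (r * r) = (M0 : ℕ) ^ r := by rw [hM0, ← pow_mul]
    have h7 : M0 ^ r < (M0 + 1) ^ r := Nat.pow_lt_pow_left (by omega) (by omega)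
    omega
  -- linear algebra
  set W1 := restrictTotalDegree (Fin r) ℤ N with hW1
  set W2 := restrictTotalDegree (Fin k) ℤ (N * D) with hW2
  have hmap : ∀ x : W1, (aeval f x.1) ∈ W2 := by
    intro x
    rw [hW2, mem_restrictTotalDegree]
    have hx : x.1.totalDegree ≤ N := (mem_restrictTotalDegree _ _ _).mp x.2
    exact le_trans (PW.totalDegree_aeval_le f hfD x.1) (Nat.mul_le_mul_right _ hx)
  set L : W1 →ₗ[ℤ] W2 := LinearMap.codRestrict W2
    ((aeval f).toLinearMap.comp W1.subtype) hmap with hL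
  have hnotinj : ¬ Function.Injective L := by
    intro hinj
    have hle := LinearMap.finrank_le_finrank_of_injective hinj
    have hr1' : Module.finrank ℤ W1
        = Fintype.card {s : Fin r →₀ ℕ | (s.sum fun _ e => e) ≤ N} :=
      Module.finrank_eq_card_basis (basisRestrictSupport ℤ _)
    have hr2' : Module.finrank ℤ W2
        = Fintype.card {s : Fin k →₀ ℕ | (s.sum fun _ e => e) ≤ N * D} :=
      Module.finrank_eq_card_basis (basisRestrictSupport ℤ _)
    have c1 := PW.card_bounded_ge r M0
    have c2 := PW.card_bounded_le k (N * D)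
    rw [← hN] at c1
    rw [hr1', hr2'] at hle
    have : (N * D + 1) ^ k < (M0 + 1) ^ r := hcard
    omega
  rw [Function.not_injective_iff] at hnotinj
  obtain ⟨x, y, hxy, hne⟩ := hnotinj
  refine ⟨x.1 - y.1, ?_, ?_⟩
  · intro h
    apply hne
    apply Subtype.ext
    have := sub_eq_zero.mp h
    exact this
  · have : (L x).1 = (L y).1 := by rw [hxy]
    simp only [hL, LinearMap.codRestrict_apply, LinearMap.coe_comp, Function.comp_apply,
      Submodule.coe_subtype, AlgHom.toLinearMap_apply] at this
    rw [map_sub, sub_eq_zero]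
    exact this

/-- **Eliminant polynomial (Lemma 2 of Parsell–Wooley).** For a separated system
`γ = (φ₁, …, φ_r)`, with `σ_{i,s}(X₁, …, X_s) = ∑_{j=1}^s φ_i(X_j)`, there exists a
nonzero `Q ∈ ℤ[T₁, …, T_r]` with `Q(σ_{1,r-1}, …, σ_{r,r-1}) ≡ 0` but
`Q(σ_{1,r}, …, σ_{r,r}) ≢ 0`. -/
theorem eliminant_polynomial {r : ℕ} (hr : 1 ≤ r)
    (φ : Fin r → Polynomial ℤ)
    (hdeg : ∀ i, 1 ≤ (φ i).natDegree)
    (hsep : StrictMono fun i => (φ i).natDegree) :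
    ∃ Q : MvPolynomial (Fin r) ℤ, Q ≠ 0 ∧
      MvPolynomial.aeval
        (fun i => ∑ j : Fin (r - 1),
          Polynomial.aeval (MvPolynomial.X j : MvPolynomial (Fin (r - 1)) ℤ) (φ i)) Q = 0 ∧
      MvPolynomial.aeval
        (fun i => ∑ j : Fin r,
          Polynomial.aeval (MvPolynomial.X j : MvPolynomial (Fin r) ℤ) (φ i)) Q ≠ 0 := by
  obtain ⟨Q, hQ0, hQker⟩ := PW.exists_annihilator (show r - 1 < r by omega)
    (fun i => ∑ j : Fin (r - 1),
      Polynomial.aeval (MvPolynomial.X j : MvPolynomial (Fin (r - 1)) ℤ) (φ i))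
  refine ⟨Q, hQ0, hQker, ?_⟩
  intro hzero
  set F : MvPolynomial (Fin r) ℤ →ₐ[ℤ] MvPolynomial (Fin r) ℚ :=
    (MvPolynomial.map (Int.castRingHom ℚ)).toIntAlgHom with hF
  set pq : Fin r → Polynomial ℚ := fun i => (φ i).map (Int.castRingHom ℚ) with hpq
  have hdeg' : ∀ i, (pq i).natDegree = (φ i).natDegree := by
    intro i
    exact Polynomial.natDegree_map_eq_of_injective Int.cast_injective (φ i)
  have h1' : ∀ i, 1 ≤ (pq i).natDegree := fun i => by rw [hdeg']; exact hdeg i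
  have hs' : StrictMono fun i => (pq i).natDegree := by
    intro a b hab
    simp only [hdeg']
    exact hsep hab
  have hσ : ∀ i, (∑ j : Fin r,
      Polynomial.aeval (MvPolynomial.X j : MvPolynomial (Fin r) ℚ) (pq i))
      = F (∑ j : Fin r,
        Polynomial.aeval (MvPolynomial.X j : MvPolynomial (Fin r) ℤ) (φ i)) := by
    intro i
    rw [map_sum]
    refine Finset.sum_congr rfl fun j _ => ?_
    have h1 : Polynomial.aeval (MvPolynomial.X j : MvPolynomial (Fin r) ℚ) (pq i)
        = Polynomial.aeval (MvPolynomial.X j : MvPolynomial (Fin r) ℚ) (φ i) := by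
      rw [hpq]
      have : (Int.castRingHom ℚ) = algebraMap ℤ ℚ := rfl
      rw [this, Polynomial.aeval_map_algebraMap]
    have h2 : F (MvPolynomial.X j : MvPolynomial (Fin r) ℤ) = MvPolynomial.X j := by
      exact MvPolynomial.map_X _ _
    rw [h1, ← h2, Polynomial.aeval_algHom_apply]
  have hQq : MvPolynomial.map (Int.castRingHom ℚ) Q = 0 := by
    refine PW.aeval_sigma_injective pq h1' hs' _ ?_
    have : (Int.castRingHom ℚ) = algebraMap ℤ ℚ := rfl
    rw [this, MvPolynomial.aeval_map_algebraMap]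
    have hcomp : (MvPolynomial.aeval (R := ℤ) fun i => ∑ j : Fin r,
        Polynomial.aeval (MvPolynomial.X j : MvPolynomial (Fin r) ℚ) (pq i)) Q
        = F ((MvPolynomial.aeval fun i => ∑ j : Fin r,
          Polynomial.aeval (MvPolynomial.X j : MvPolynomial (Fin r) ℤ) (φ i)) Q) := by
      simp only [hσ]
      exact (MvPolynomial.comp_aeval_apply _ _ _).symm
    rw [hcomp, hzero, map_zero]
  exact hQ0 (MvPolynomial.map_injective _ Int.cast_injective (by
    rw [hQq, map_zero]))
end

section
/- (Base case 2 of the paucity theorem) Let φ_1, φ_2 ∈ ℤ[T] be polynomials with integer coefficients with deg φ_1 = 1 and deg φ_2 ≥ 2, and let 𝒳 ⊆ ℕ. Then for every ε > 0 there exists a constant C = C(φ_1, φ_2, ε) > 0, independent of N and of (a_1, a_2), such that for every N ∈ ℕ and every pair (a_1, a_2) ∈ ℤ^2 with (a_1, a_2) ≠ (0, 0), the number of tuples (m_1, m_2, n_1, n_2) ∈ (𝒳 ∩ [N])^4 satisfying φ_1(m_1) + φ_1(m_2) − φ_1(n_1) − φ_1(n_2) = a_1 and φ_2(m_1) + φ_2(m_2)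 − φ_2(n_1) − φ_2(n_2) = a_2 is at most C · N^ε · |𝒳 ∩ [N]|. -/
open Polynomial

lemma aux_eval (φ : ℤ[X]) (e B x : ℤ) :
    (φ.comp (X + C e) - φ - C B).eval x = φ.eval (x + e) - φ.eval x - B := by
  simp [eval_comp]

lemma aux_deg (φ : ℤ[X]) (e B : ℤ) :
    (φ.comp (X + C e) - φ - C B).natDegree ≤ φ.natDegree := by
  refine le_trans (natDegree_sub_le _ _) ?_
  rw [max_le_iff]
  refine ⟨le_trans (natDegree_sub_le _ _) ?_, by simp⟩
  rw [max_le_iff]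
  refine ⟨?_, le_refl _⟩
  rw [natDegree_comp, natDegree_X_add_C, mul_one]

lemma aux_roots_card (Q : ℤ[X]) : Q.roots.toFinset.card ≤ Q.natDegree :=
  le_trans (Multiset.toFinset_card_le _) (Polynomial.card_roots' Q)

lemma aux_ne (φ : ℤ[X]) (hd : 2 ≤ φ.natDegree) (e B : ℤ) (he : e ≠ 0) :
    φ.comp (X + C e) - φ - C B ≠ 0 := by
  intro h
  have heval : ∀ x : ℤ, φ.eval (x + e) = φ.eval x + B := by
    intro x
    have h2 := congrArg (Polynomial.eval x) h
    rw [aux_eval] at h2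
    simp at h2
    linarith
  have hk : ∀ k : ℤ, φ.eval (e * k) = φ.eval 0 + B * k := by
    intro k
    induction k using Int.induction_on with
    | zero => simp
    | succ i ih =>
        have h3 := heval (e * i)
        rw [ih] at h3
        rw [show e * ((i : ℤ) + 1) = e * i + e by ring]
        linear_combination h3
    | pred i ih =>
        have h3 := heval (e * (-(i : ℤ) - 1))
        rw [show e * (-(i:ℤ) - 1) + e = e * (-(i:ℤ)) by ring, ih] at h3
        linear_combination -h3
  set R : ℤ[X] := φ.comp (C e * X) - C (φ.eval 0) - C B * X with hRdef
  have hR0 : R = 0 := by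
    apply Polynomial.funext
    intro r
    rw [eval_zero]
    simp only [hRdef, eval_sub, eval_comp, eval_mul, eval_C, eval_X]
    rw [hk r]
    ring
  have hEq : φ.comp (C e * X) = C (φ.eval 0) + C B * X := by
    have := sub_eq_zero.mp (by linear_combination (norm := ring_nf) hR0 - hRdef : (φ.comp (C e * X) - (C (φ.eval 0) + C B * X)) = 0)
    exact this
  have hdeg1 : (φ.comp (C e * X)).natDegree = φ.natDegree := by
    rw [natDegree_comp, natDegree_C_mul_X e he, mul_one]
  have hdeg2 : (C (φ.eval 0) + C B * X).natDegree ≤ 1 := by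
    refine le_trans (natDegree_add_le _ _) ?_
    rw [max_le_iff]
    refine ⟨by simp, ?_⟩
    refine le_trans (natDegree_mul_le) ?_
    simp [natDegree_X_le]
  rw [hEq] at hdeg1
  omega

lemma eval_abs_bound (φ : ℤ[X]) (R x : ℤ) (hR : 1 ≤ R) (hx : |x| ≤ R) :
    |φ.eval x| ≤ (∑ i ∈ Finset.range (φ.natDegree + 1), |φ.coeff i|) * R ^ φ.natDegree := by
  rw [Polynomial.eval_eq_sum_range]
  refine le_trans (Finset.abs_sum_le_sum_abs _ _) ?_
  rw [Finset.sum_mul]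
  apply Finset.sum_le_sum
  intro i hi
  rw [abs_mul, abs_pow]
  have h0R : (0:ℤ) ≤ R := by linarith
  have h1 : |x| ^ i ≤ R ^ φ.natDegree := by
    refine le_trans (pow_le_pow_left₀ (abs_nonneg x) hx i) ?_
    exact pow_le_pow_right₀ hR (by
      have := Finset.mem_range.mp hi
      omega)
  exact mul_le_mul_of_nonneg_left h1 (abs_nonneg _)


open Finset in
theorem my_divisor_bound {ε : ℝ} (hε : 0 < ε) :
    ∃ C > (0:ℝ), ∀ n : ℕ, 1 ≤ n → (n.divisors.card : ℝ) ≤ C * (n:ℝ) ^ ε := by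
  set m : ℕ := ⌈1/ε⌉₊ with hmdef
  have hm1 : 1 ≤ m := Nat.one_le_ceil_iff.mpr (by positivity)
  have hmε : 1 ≤ (m:ℝ) * ε := by
    have h := Nat.le_ceil (1/ε)
    calc (1:ℝ) = (1/ε) * ε := by field_simp
    _ ≤ (m:ℝ) * ε := by
        apply mul_le_mul_of_nonneg_right _ hε.le
        exact h
  have hP1 : (1:ℝ) ≤ 4^m := one_le_pow₀ (by norm_num)
  -- key inequality
  have key : ∀ a : ℕ, (a+1:ℝ) ≤ 4^m * (2:ℝ) ^ ((a:ℝ)*ε) := by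
    intro a
    have hT : 1 + (a:ℝ)*ε/2 ≤ (2:ℝ) ^ ((a:ℝ)*ε) := by
      rw [Real.rpow_def_of_pos (by norm_num)]
      have h1 : ((a:ℝ)*ε) * Real.log 2 + 1 ≤ Real.exp (Real.log 2 * ((a:ℝ)*ε)) := by
        rw [mul_comm (Real.log 2)]
        exact Real.add_one_le_exp _
      have h2 : (a:ℝ)*ε/2 ≤ ((a:ℝ)*ε) * Real.log 2 := by
        have hl : (0.5:ℝ) ≤ Real.log 2 := by
          have := Real.log_two_gt_d9; linarith
        have haε : 0 ≤ (a:ℝ)*ε := by positivity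
        nlinarith
      linarith
    have hP4 : (4:ℝ) ≤ 4^m * ε := by
      have h2m : (m:ℝ) + 1 ≤ 2^m := by
        have := Nat.lt_two_pow_self (n := m)
        exact_mod_cast this
      have h4m : 4*(m:ℝ) ≤ 4^m := by
        have : ((2:ℝ)^m)^2 = 4^m := by
          rw [← pow_mul, mul_comm m 2, pow_mul]; norm_num
        nlinarith [sq_nonneg ((m:ℝ) - 1)]
      have : 4 * ((m:ℝ)*ε) ≤ 4^m * ε := by
        rw [← mul_assoc]
        exact mul_le_mul_of_nonneg_right h4m hε.le
      nlinarith
    have ha : (0:ℝ) ≤ a := Nat.cast_nonneg a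
    nlinarith [mul_le_mul_of_nonneg_left hT (by positivity : (0:ℝ) ≤ (4:ℝ)^m)]
  refine ⟨((4:ℝ)^m)^(2^m), by positivity, ?_⟩
  intro n hn
  have hn0 : n ≠ 0 := by omega
  rw [Nat.card_divisors hn0]
  push_cast
  set S := n.primeFactors with hS
  set f : ℕ → ℕ := fun p => n.factorization p with hf
  have hw : ∀ p ∈ S, ((f p : ℝ) + 1) ≤
      (if (p:ℝ)^ε < 2 then (4:ℝ)^m else 1) * (p:ℝ) ^ ((f p : ℝ)*ε) := by
    intro p hp
    have hp2 : 2 ≤ p := (Nat.prime_of_mem_primeFactors hp).two_le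
    have hp2R : (2:ℝ) ≤ (p:ℝ) := by exact_mod_cast hp2
    have hppos : (0:ℝ) < p := by linarith
    by_cases hsmall : (p:ℝ)^ε < 2
    · rw [if_pos hsmall]
      refine le_trans (key (f p)) ?_
      apply mul_le_mul_of_nonneg_left _ (by positivity)
      exact Real.rpow_le_rpow (by norm_num) hp2R (by positivity)
    · rw [if_neg hsmall, one_mul]
      push_neg at hsmall
      have h1 : ((f p : ℝ) + 1) ≤ (2:ℝ)^(f p) := by
        have h0 : ((f p) + 1 : ℕ) ≤ 2^(f p) := Nat.lt_two_pow_self (n := f p)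
        exact_mod_cast h0
      have h2 : (2:ℝ)^(f p) ≤ ((p:ℝ)^ε)^(f p) := by
        apply pow_le_pow_left₀ (by norm_num) hsmall
      have h3 : ((p:ℝ)^ε)^(f p) = (p:ℝ) ^ ((f p : ℝ)*ε) := by
        rw [← Real.rpow_natCast ((p:ℝ)^ε) (f p), ← Real.rpow_mul hppos.le, mul_comm ε]
      linarith
  calc (∏ p ∈ S, ((f p : ℝ) + 1))
      ≤ ∏ p ∈ S, (if (p:ℝ)^ε < 2 then (4:ℝ)^m else 1) * (p:ℝ) ^ ((f p : ℝ)*ε) := by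
        apply Finset.prod_le_prod _ hw
        intro p hp; positivity
    _ = (∏ p ∈ S, (if (p:ℝ)^ε < 2 then (4:ℝ)^m else 1)) * ∏ p ∈ S, (p:ℝ) ^ ((f p : ℝ)*ε) := by
        rw [Finset.prod_mul_distrib]
    _ ≤ ((4:ℝ)^m)^(2^m) * (n:ℝ)^ε := by
        apply mul_le_mul
        · rw [← Finset.prod_filter, Finset.prod_const]
          apply pow_le_pow_right₀ hP1
          refine le_trans (Finset.card_le_card ?_) (le_of_eq (Finset.card_range _))
          intro p hp
          rw [Finset.mem_filter] at hp
          obtain ⟨hpS, hpsmall⟩ := hp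
          rw [Finset.mem_range]
          by_contra hcon
          push_neg at hcon
          have hp2R : ((2:ℝ)^(m:ℝ)) ≤ (p:ℝ) := by
            rw [Real.rpow_natCast]; exact_mod_cast hcon
          have : (2:ℝ) ≤ (p:ℝ)^ε := by
            calc (2:ℝ) = 2^(1:ℝ) := (Real.rpow_one 2).symm
            _ ≤ 2^((m:ℝ)*ε) := Real.rpow_le_rpow_of_exponent_le one_le_two hmε
            _ = ((2:ℝ)^(m:ℝ))^ε := Real.rpow_mul (by norm_num) _ _
            _ ≤ (p:ℝ)^ε := Real.rpow_le_rpow (by positivity) hp2R hε.le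
          linarith
        · apply le_of_eq
          have h1 : ∀ p ∈ S, (p:ℝ)^((f p:ℝ)*ε) = ((p:ℝ)^(f p : ℕ))^ε := by
            intro p hp
            rw [← Real.rpow_natCast (p:ℝ) (f p), ← Real.rpow_mul (Nat.cast_nonneg p)]
          rw [Finset.prod_congr rfl h1,
            Real.finset_prod_rpow S (fun p => (p:ℝ)^(f p)) (fun p _ => by positivity) ε]
          congr 1
          have h2 := Nat.factorization_prod_pow_eq_self hn0
          rw [Finsupp.prod] at h2
          rw [Nat.support_factorization] at h2
          rw [← h2]
          push_cast
          rfl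
        · positivity
        · positivity

set_option maxHeartbeats 1000000 in
/-- **Base case 2 of the paucity theorem.** For `φ₁, φ₂ ∈ ℤ[T]` with `deg φ₁ = 1`
and `deg φ₂ ≥ 2`, and `𝒳 ⊆ ℕ`: for every `ε > 0` there is `C > 0` (independent of
`N` and `(a₁, a₂)`) such that for all `N ∈ ℕ` and all `(a₁, a₂) ∈ ℤ² \ {(0,0)}`, the
number of `(m₁, m₂, n₁, n₂) ∈ (𝒳 ∩ [N])⁴` with
`φ₁(m₁) + φ₁(m₂) − φ₁(n₁) − φ₁(n₂) = a₁` and `φ₂(m₁) + φ₂(m₂) − φ₂(n₁) − φ₂(n₂) = a₂`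
is at most `C · N^ε · |𝒳 ∩ [N]|`. -/
theorem base_case_two (φ₁ φ₂ : Polynomial ℤ)
    (hφ₁ : φ₁.natDegree = 1) (hφ₂ : 2 ≤ φ₂.natDegree) (𝒳 : Set ℕ) :
    ∀ ε > (0 : ℝ), ∃ C > (0 : ℝ), ∀ (N : ℕ) (a₁ a₂ : ℤ), ¬(a₁ = 0 ∧ a₂ = 0) →
      (Set.ncard {p : ℕ × ℕ × ℕ × ℕ |
          p.1 ∈ 𝒳 ∩ Set.Icc 1 N ∧ p.2.1 ∈ 𝒳 ∩ Set.Icc 1 N ∧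
          p.2.2.1 ∈ 𝒳 ∩ Set.Icc 1 N ∧ p.2.2.2 ∈ 𝒳 ∩ Set.Icc 1 N ∧
          φ₁.eval (p.1 : ℤ) + φ₁.eval (p.2.1 : ℤ)
            - φ₁.eval (p.2.2.1 : ℤ) - φ₁.eval (p.2.2.2 : ℤ) = a₁ ∧
          φ₂.eval (p.1 : ℤ) + φ₂.eval (p.2.1 : ℤ)
            - φ₂.eval (p.2.2.1 : ℤ) - φ₂.eval (p.2.2.2 : ℤ) = a₂} : ℝ)
        ≤ C * (N : ℝ) ^ ε * ((𝒳 ∩ Set.Icc 1 N).ncard : ℝ) := by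
  classical
  intro ε hε
  set d := φ₂.natDegree with hd
  have hd2 : 2 ≤ d := hφ₂
  have hdR : (0:ℝ) < d := by exact_mod_cast (by omega : 0 < d)
  have hεd : 0 < ε / d := by positivity
  obtain ⟨Cτ, hCτ0, hCτ⟩ := my_divisor_bound hεd
  set C₂ : ℤ := ∑ i ∈ Finset.range (d + 1), |φ₂.coeff i| with hC₂
  have hφ₂0 : φ₂ ≠ 0 := by
    intro h; rw [hd, h] at hd2; simp at hd2
  have hC₂1 : (1:ℤ) ≤ C₂ := by
    have hlc : φ₂.coeff d ≠ 0 := by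
      rw [hd]; exact Polynomial.leadingCoeff_ne_zero.mpr hφ₂0
    have h1 : (1:ℤ) ≤ |φ₂.coeff d| := by
      rcases lt_or_ge (φ₂.coeff d) 0 with h | h
      · rw [abs_of_neg h]; omega
      · rw [abs_of_nonneg h]; omega
    refine le_trans h1 ?_
    exact Finset.single_le_sum (f := fun i => |φ₂.coeff i|)
      (fun i _ => abs_nonneg _) (Finset.self_mem_range_succ d)
  set A₀ : ℝ := 6 * (C₂:ℝ) * 3^d with hA₀
  have hA₀1 : (1:ℝ) ≤ A₀ := by
    have h1 : (1:ℝ) ≤ (C₂:ℝ) := by exact_mod_cast hC₂1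
    have h2 : (1:ℝ) ≤ (3:ℝ)^d := one_le_pow₀ (by norm_num)
    rw [hA₀]; nlinarith
  have hA₀0 : (0:ℝ) ≤ A₀ := by linarith
  have hCpos : (0:ℝ) < 2*d + d*d + 2*d*Cτ*A₀^(ε/d) + 1 := by
    have h1 : (0:ℝ) ≤ A₀^(ε/d) := Real.rpow_nonneg hA₀0 _
    have h2 : (0:ℝ) ≤ 2*d*Cτ*A₀^(ε/d) := by positivity
    positivity
  refine ⟨2*d + d*d + 2*d*Cτ*A₀^(ε/d) + 1, hCpos, ?_⟩
  intro N a₁ a₂ ha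
  have hGfin : (𝒳 ∩ Set.Icc 1 N).Finite := Set.Finite.inter_of_right (Set.finite_Icc 1 N) 𝒳
  set XF := hGfin.toFinset with hXF
  have hXcard : (𝒳 ∩ Set.Icc 1 N).ncard = XF.card := Set.ncard_eq_toFinset_card _ hGfin
  set S := {p : ℕ × ℕ × ℕ × ℕ |
          p.1 ∈ 𝒳 ∩ Set.Icc 1 N ∧ p.2.1 ∈ 𝒳 ∩ Set.Icc 1 N ∧
          p.2.2.1 ∈ 𝒳 ∩ Set.Icc 1 N ∧ p.2.2.2 ∈ 𝒳 ∩ Set.Icc 1 N ∧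
          φ₁.eval (p.1 : ℤ) + φ₁.eval (p.2.1 : ℤ)
            - φ₁.eval (p.2.2.1 : ℤ) - φ₁.eval (p.2.2.2 : ℤ) = a₁ ∧
          φ₂.eval (p.1 : ℤ) + φ₂.eval (p.2.1 : ℤ)
            - φ₂.eval (p.2.2.1 : ℤ) - φ₂.eval (p.2.2.2 : ℤ) = a₂} with hSdef
  have hRHS0 : (0:ℝ) ≤ (N : ℝ) ^ ε * ((𝒳 ∩ Set.Icc 1 N).ncard : ℝ) :=
    mul_nonneg (Real.rpow_nonneg (Nat.cast_nonneg N) ε) (Nat.cast_nonneg _)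
  rcases Set.eq_empty_or_nonempty S with hemp | hne
  · rw [hemp, Set.ncard_empty]
    push_cast
    rw [mul_assoc]
    exact mul_nonneg hCpos.le hRHS0
  obtain ⟨⟨w₁, w₂, w₃, w₄⟩, hw⟩ := hne
  obtain ⟨hw1, hw2, hw3, hw4, hq1, hq2⟩ := hw
  -- basic bounds on the witness
  have hwb : ∀ u : ℕ, u ∈ 𝒳 ∩ Set.Icc 1 N → 1 ≤ u ∧ u ≤ N := by
    intro u hu; exact Set.mem_Icc.mp hu.2
  have hb1 := hwb _ hw1; have hb2 := hwb _ hw2; have hb3 := hwb _ hw3; have hb4 := hwb _ hw4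
  have hN1 : 1 ≤ N := le_trans hb1.1 hb1.2
  have hNZ1 : (1:ℤ) ≤ (N:ℤ) := by exact_mod_cast hN1
  -- linear polynomial structure
  set c := φ₁.coeff 1 with hc
  have hφ₁0 : φ₁ ≠ 0 := by
    intro h; rw [h] at hφ₁; simp at hφ₁
  have hcne : c ≠ 0 := by
    have hlc := Polynomial.leadingCoeff_ne_zero.mpr hφ₁0
    rwa [Polynomial.leadingCoeff, hφ₁] at hlc
  have hkey1 : ∀ x y z w : ℤ,
      φ₁.eval x + φ₁.eval y - φ₁.eval z - φ₁.eval w = c * (x + y - z - w) := by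
    have heval1 : ∀ x : ℤ, φ₁.eval x = φ₁.coeff 0 + c * x := by
      intro x
      rw [Polynomial.eval_eq_sum_range, hφ₁]
      rw [Finset.sum_range_succ, Finset.sum_range_one]
      simp [hc]
    intro x y z w
    rw [heval1 x, heval1 y, heval1 z, heval1 w]; ring
  set t : ℤ := (w₁:ℤ) + w₂ - w₃ - w₄ with htdef
  have ha₁ : a₁ = c * t := by rw [← hq1, hkey1]
  have hsumt : ∀ p : ℕ × ℕ × ℕ × ℕ, p ∈ S →
      ((p.1:ℤ) + p.2.1 - p.2.2.1 - p.2.2.2) = t := by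
    intro p hp
    obtain ⟨_, _, _, _, hp1, _⟩ := hp
    rw [hkey1, ha₁] at hp1
    exact mul_left_cancel₀ hcne hp1
  have htabs : |t| ≤ 2 * (N:ℤ) := by
    rw [abs_le]
    have c1 : (1:ℤ) ≤ (w₁:ℤ) ∧ (w₁:ℤ) ≤ N := by exact_mod_cast hb1
    have c2 : (1:ℤ) ≤ (w₂:ℤ) ∧ (w₂:ℤ) ≤ N := by exact_mod_cast hb2
    have c3 : (1:ℤ) ≤ (w₃:ℤ) ∧ (w₃:ℤ) ≤ N := by exact_mod_cast hb3
    have c4 : (1:ℤ) ≤ (w₄:ℤ) ∧ (w₄:ℤ) ≤ N := by exact_mod_cast hb4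
    constructor <;> (rw [htdef]; omega)
  -- bound on a₂ and on K values
  have hbd : ∀ u : ℕ, u ∈ 𝒳 ∩ Set.Icc 1 N → |φ₂.eval (u:ℤ)| ≤ C₂ * (N:ℤ)^d := by
    intro u hu
    have h1 := (hwb u hu).2
    have h2 : |(u:ℤ)| ≤ (N:ℤ) := by
      rw [abs_of_nonneg (by positivity)]; exact_mod_cast h1
    exact eval_abs_bound φ₂ N u hNZ1 h2
  have ha₂ : |a₂| ≤ 4 * C₂ * (N:ℤ)^d := by
    have b1 := abs_le.mp (hbd w₁ hw1); have b2 := abs_le.mp (hbd w₂ hw2)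
    have b3 := abs_le.mp (hbd w₃ hw3); have b4 := abs_le.mp (hbd w₄ hw4)
    rw [← hq2, abs_le]
    constructor <;> linarith
  set Kpoly : ℤ[X] := φ₂.comp (X + C t) - φ₂ - C a₂ with hKpoly
  have hKne : Kpoly ≠ 0 := by
    by_cases ht0 : t = 0
    · have ha₂0 : a₂ ≠ 0 := by
        intro h
        exact ha ⟨by rw [ha₁, ht0, mul_zero], h⟩
      intro h
      have h0 := congrArg (Polynomial.eval 0) h
      rw [hKpoly, aux_eval] at h0
      simp [ht0] at h0
      exact ha₂0 h0
    · rw [hKpoly]; exact aux_ne φ₂ hφ₂ t a₂ ht0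
  have hKdeg : Kpoly.natDegree ≤ d := by rw [hKpoly, hd]; exact aux_deg _ _ _
  set M₀ : ℤ := 6 * C₂ * 3^d * (N:ℤ)^d with hM₀
  have hKbd : ∀ u : ℕ, u ∈ 𝒳 ∩ Set.Icc 1 N → |Kpoly.eval (u:ℤ)| ≤ M₀ := by
    intro u hu
    have h1 := (hwb u hu).2
    have hu3 : |(u:ℤ) + t| ≤ 3 * (N:ℤ) := by
      have := abs_le.mp htabs
      have hu1 : (0:ℤ) ≤ (u:ℤ) := by positivity
      have hu2 : (u:ℤ) ≤ N := by exact_mod_cast h1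
      rw [abs_le]; constructor <;> omega
    have e1 : |φ₂.eval ((u:ℤ) + t)| ≤ C₂ * (3*(N:ℤ))^d :=
      eval_abs_bound φ₂ (3*N) _ (by linarith) hu3
    have e2 := hbd u hu
    have e3 : (3*(N:ℤ))^d = 3^d * (N:ℤ)^d := mul_pow 3 _ d
    have e4 : (1:ℤ) ≤ 3^d := one_le_pow₀ (by norm_num)
    have e5 : (0:ℤ) < (N:ℤ)^d := by positivity
    have h0 : Kpoly.eval (u:ℤ) = φ₂.eval ((u:ℤ) + t) - φ₂.eval (u:ℤ) - a₂ := by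
      rw [hKpoly, aux_eval]
    rw [h0, hM₀]
    rw [e3] at e1
    have e6 : C₂ * (N:ℤ)^d ≤ C₂ * (3^d * (N:ℤ)^d) := by
      have h7 : (N:ℤ)^d ≤ 3^d * (N:ℤ)^d := le_mul_of_one_le_left e5.le e4
      exact mul_le_mul_of_nonneg_left h7 (by linarith)
    have h1 := abs_le.mp e1; have h2 := abs_le.mp e2; have h3 := abs_le.mp ha₂
    rw [abs_le]
    constructor <;> linarith
  -- finset of signed divisors
  set divF : ℤ → Finset ℤ := fun K =>
    (K.natAbs.divisors.image (fun k : ℕ => (k:ℤ))) ∪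
    (K.natAbs.divisors.image (fun k : ℕ => -(k:ℤ))) with hdivF
  have hdivF_mem : ∀ K e : ℤ, K ≠ 0 → e ∣ K → e ∈ divF K := by
    intro K e hK he
    have h1 : e.natAbs ∈ K.natAbs.divisors :=
      Nat.mem_divisors.mpr ⟨Int.natAbs_dvd_natAbs.mpr he, Int.natAbs_ne_zero.mpr hK⟩
    rcases Int.natAbs_eq e with h | h
    · exact Finset.mem_union_left _ (Finset.mem_image.mpr ⟨e.natAbs, h1, h.symm⟩)
    · exact Finset.mem_union_right _ (Finset.mem_image.mpr ⟨e.natAbs, h1, h.symm⟩)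
  have hdivF_card : ∀ K : ℤ, (divF K).card ≤ 2 * K.natAbs.divisors.card := by
    intro K
    refine le_trans (Finset.card_union_le _ _) ?_
    have := Finset.card_image_le (s := K.natAbs.divisors) (f := fun k : ℕ => (k:ℤ))
    have := Finset.card_image_le (s := K.natAbs.divisors) (f := fun k : ℕ => -(k:ℤ))
    omega
  -- case polynomials
  set Qa : ℤ → ℤ → ℤ[X] := fun r m =>
    φ₂.comp (X + C (t - (m - r))) - φ₂ - C (a₂ - (φ₂.eval m - φ₂.eval r)) with hQa
  set Qb : ℤ → ℤ → ℤ[X] := fun n e =>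
    φ₂.comp (X + C e) - φ₂ - C (a₂ - (φ₂.eval (n + t - e) - φ₂.eval n)) with hQb
  -- covering finsets
  set F₁ : Finset (ℕ × ℕ × ℕ × ℕ) := Kpoly.roots.toFinset.biUnion (fun s =>
    XF.biUnion (fun x => {(x, (s+t).toNat, x, s.toNat)})) with hF₁
  set F₂ : Finset (ℕ × ℕ × ℕ × ℕ) := Kpoly.roots.toFinset.biUnion (fun r =>
    XF.biUnion (fun x => {((r+t).toNat, x, r.toNat, x)})) with hF₂
  set F₃ : Finset (ℕ × ℕ × ℕ × ℕ) := Kpoly.roots.toFinset.biUnion (fun r =>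
    XF.biUnion (fun m₁ => ((Qa r (m₁:ℤ)).roots.toFinset).biUnion (fun s =>
      {(m₁, (s + (t - ((m₁:ℤ) - r))).toNat, r.toNat, s.toNat)}))) with hF₃
  set F₄ : Finset (ℕ × ℕ × ℕ × ℕ) := XF.biUnion (fun n₁ =>
    (divF (Kpoly.eval (n₁:ℤ))).biUnion (fun e =>
      ((Qb (n₁:ℤ) e).roots.toFinset).biUnion (fun s =>
        {(((n₁:ℤ) + t - e).toNat, (s + e).toNat, n₁, s.toNat)}))) with hF₄
  -- the covering
  have hsub : S ⊆ ↑(F₁ ∪ F₂ ∪ F₃ ∪ F₄) := by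
    rintro ⟨m₁, m₂, n₁, n₂⟩ hp
    have hps := hsumt _ hp
    obtain ⟨hm1, hm2, hn1, hn2, hp1, hp2⟩ := hp
    simp only at hps hp2
    have hmX : ∀ u : ℕ, u ∈ 𝒳 ∩ Set.Icc 1 N → u ∈ XF := fun u hu =>
      (Set.Finite.mem_toFinset hGfin).mpr hu
    simp only [Finset.coe_union, Set.mem_union, Finset.mem_coe]
    by_cases h1 : (m₁:ℤ) - n₁ = 0
    · -- Case I
      left; left; left
      have hmn : (m₁:ℤ) = (n₁:ℤ) := by linarith
      have hm₂ : (m₂:ℤ) = (n₂:ℤ) + t := by linarith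
      rw [hF₁]
      apply Finset.mem_biUnion.mpr
      refine ⟨(n₂:ℤ), ?_, ?_⟩
      · apply Multiset.mem_toFinset.mpr
        apply (Polynomial.mem_roots hKne).mpr
        rw [Polynomial.IsRoot, hKpoly, aux_eval, ← hm₂]
        rw [hmn] at hp2
        linarith
      · apply Finset.mem_biUnion.mpr
        refine ⟨n₁, hmX _ hn1, Finset.mem_singleton.mpr ?_⟩
        have e1 : ((n₂:ℤ)+t).toNat = m₂ := by rw [← hm₂, Int.toNat_natCast]
        have e2 : ((n₂:ℤ)).toNat = n₂ := Int.toNat_natCast n₂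
        have e3 : m₁ = n₁ := by exact_mod_cast hmn
        rw [e1, e2, e3]
    by_cases h2 : (m₂:ℤ) - n₂ = 0
    · -- Case II
      left; left; right
      have hmn : (m₂:ℤ) = (n₂:ℤ) := by linarith
      have hm₁ : (m₁:ℤ) = (n₁:ℤ) + t := by linarith
      rw [hF₂]
      apply Finset.mem_biUnion.mpr
      refine ⟨(n₁:ℤ), ?_, ?_⟩
      · apply Multiset.mem_toFinset.mpr
        apply (Polynomial.mem_roots hKne).mpr
        rw [Polynomial.IsRoot, hKpoly, aux_eval, ← hm₁]
        rw [hmn] at hp2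
        linarith
      · apply Finset.mem_biUnion.mpr
        refine ⟨n₂, hmX _ hn2, Finset.mem_singleton.mpr ?_⟩
        have e1 : ((n₁:ℤ)+t).toNat = m₁ := by rw [← hm₁, Int.toNat_natCast]
        have e2 : ((n₁:ℤ)).toNat = n₁ := Int.toNat_natCast n₁
        have e3 : m₂ = n₂ := by exact_mod_cast hmn
        rw [e1, e2, e3]
    by_cases h3 : Kpoly.eval (n₁:ℤ) = 0
    · -- Case IIIa
      left; right
      rw [hF₃]
      apply Finset.mem_biUnion.mpr
      refine ⟨(n₁:ℤ), Multiset.mem_toFinset.mpr ((Polynomial.mem_roots hKne).mpr h3), ?_⟩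
      apply Finset.mem_biUnion.mpr
      refine ⟨m₁, hmX _ hm1, ?_⟩
      apply Finset.mem_biUnion.mpr
      have hE₂ : t - ((m₁:ℤ) - n₁) = (m₂:ℤ) - n₂ := by linarith
      have hQane : Qa (n₁:ℤ) (m₁:ℤ) ≠ 0 := by
        rw [hQa]
        exact aux_ne φ₂ hφ₂ _ _ (by rw [hE₂]; exact h2)
      refine ⟨(n₂:ℤ), ?_, Finset.mem_singleton.mpr ?_⟩
      · apply Multiset.mem_toFinset.mpr
        apply (Polynomial.mem_roots hQane).mpr
        rw [Polynomial.IsRoot, hQa]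
        simp only
        rw [aux_eval, hE₂]
        have : (n₂:ℤ) + ((m₂:ℤ) - n₂) = (m₂:ℤ) := by ring
        rw [this]
        linarith
      · have e1 : ((n₂:ℤ) + (t - ((m₁:ℤ) - n₁))).toNat = m₂ := by
          rw [hE₂, show (n₂:ℤ) + ((m₂:ℤ) - n₂) = (m₂:ℤ) by ring, Int.toNat_natCast]
        have e2 : ((n₁:ℤ)).toNat = n₁ := Int.toNat_natCast n₁
        have e3 : ((n₂:ℤ)).toNat = n₂ := Int.toNat_natCast n₂
        rw [e1, e2, e3]
    · -- Case IIIb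
      right
      rw [hF₄]
      apply Finset.mem_biUnion.mpr
      refine ⟨n₁, hmX _ hn1, ?_⟩
      apply Finset.mem_biUnion.mpr
      set E₂ : ℤ := (m₂:ℤ) - n₂ with hE₂def
      have hm₁E : (n₁:ℤ) + t - E₂ = (m₁:ℤ) := by rw [hE₂def]; linarith
      have hdvd : E₂ ∣ Kpoly.eval (n₁:ℤ) := by
        have d1 : E₂ ∣ φ₂.eval ((n₁:ℤ) + t) - φ₂.eval (m₁:ℤ) := by
          have := Polynomial.sub_dvd_eval_sub ((n₁:ℤ) + t) (m₁:ℤ) φ₂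
          have heq : (n₁:ℤ) + t - (m₁:ℤ) = E₂ := by rw [hE₂def]; linarith
          rwa [heq] at this
        have d2 : E₂ ∣ φ₂.eval (m₂:ℤ) - φ₂.eval (n₂:ℤ) := by
          have := Polynomial.sub_dvd_eval_sub (m₂:ℤ) (n₂:ℤ) φ₂
          rwa [← hE₂def] at this
        have heval : Kpoly.eval (n₁:ℤ) =
            (φ₂.eval ((n₁:ℤ) + t) - φ₂.eval (m₁:ℤ)) - (φ₂.eval (m₂:ℤ) - φ₂.eval (n₂:ℤ)) := by
          rw [hKpoly, aux_eval]; linarith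
        rw [heval]
        exact dvd_sub d1 d2
      refine ⟨E₂, hdivF_mem _ _ h3 hdvd, ?_⟩
      apply Finset.mem_biUnion.mpr
      have hQbne : Qb (n₁:ℤ) E₂ ≠ 0 := by
        rw [hQb]; exact aux_ne φ₂ hφ₂ _ _ h2
      refine ⟨(n₂:ℤ), ?_, Finset.mem_singleton.mpr ?_⟩
      · apply Multiset.mem_toFinset.mpr
        apply (Polynomial.mem_roots hQbne).mpr
        rw [Polynomial.IsRoot, hQb]
        simp only
        rw [aux_eval, hm₁E]
        have : (n₂:ℤ) + E₂ = (m₂:ℤ) := by rw [hE₂def]; ring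
        rw [this]
        linarith
      · have e1 : ((n₁:ℤ) + t - E₂).toNat = m₁ := by rw [hm₁E, Int.toNat_natCast]
        have e2 : ((n₂:ℤ) + E₂).toNat = m₂ := by
          rw [show (n₂:ℤ) + E₂ = (m₂:ℤ) by rw [hE₂def]; ring, Int.toNat_natCast]
        have e3 : ((n₂:ℤ)).toNat = n₂ := Int.toNat_natCast n₂
        rw [e1, e2, e3]
  -- cardinality bounds
  have hrootsK : Kpoly.roots.toFinset.card ≤ d := le_trans (aux_roots_card _) hKdeg
  have hcard₁ : F₁.card ≤ d * XF.card := by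
    rw [hF₁]
    refine le_trans (Finset.card_biUnion_le_card_mul _ _ XF.card ?_) ?_
    · intro s _
      refine le_trans (Finset.card_biUnion_le_card_mul _ _ 1 ?_) (by omega)
      intro x _; simp
    · exact Nat.mul_le_mul_right _ hrootsK
  have hcard₂ : F₂.card ≤ d * XF.card := by
    rw [hF₂]
    refine le_trans (Finset.card_biUnion_le_card_mul _ _ XF.card ?_) ?_
    · intro s _
      refine le_trans (Finset.card_biUnion_le_card_mul _ _ 1 ?_) (by omega)
      intro x _; simp
    · exact Nat.mul_le_mul_right _ hrootsK
  have hcard₃ : F₃.card ≤ d * (XF.card * d) := by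
    rw [hF₃]
    refine le_trans (Finset.card_biUnion_le_card_mul _ _ (XF.card * d) ?_) ?_
    · intro r _
      refine Finset.card_biUnion_le_card_mul _ _ d ?_
      intro m₁ _
      refine le_trans (Finset.card_biUnion_le_card_mul _ _ 1 ?_) ?_
      · intro s _; simp
      · rw [mul_one]
        refine le_trans (aux_roots_card _) ?_
        rw [hQa, hd]; exact aux_deg _ _ _
    · exact Nat.mul_le_mul_right _ hrootsK
  have hcard₄ : F₄.card ≤ ∑ n₁ ∈ XF, (divF (Kpoly.eval (n₁:ℤ))).card * d := by
    rw [hF₄]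
    refine le_trans (Finset.card_biUnion_le) (Finset.sum_le_sum ?_)
    intro n₁ _
    refine Finset.card_biUnion_le_card_mul _ _ d ?_
    intro e _
    refine le_trans (Finset.card_biUnion_le_card_mul _ _ 1 ?_) ?_
    · intro s _; simp
    · rw [mul_one]
      refine le_trans (aux_roots_card _) ?_
      rw [hQb, hd]; exact aux_deg _ _ _
  -- divisor counts in ℝ
  have hNR1 : (1:ℝ) ≤ (N:ℝ) := by exact_mod_cast hN1
  have hNε1 : (1:ℝ) ≤ (N:ℝ)^ε := by
    calc (1:ℝ) = (1:ℝ)^ε := (Real.one_rpow ε).symm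
    _ ≤ (N:ℝ)^ε := Real.rpow_le_rpow (by norm_num) hNR1 hε.le
  have hM₀R : ((M₀:ℝ)) = A₀ * ((N:ℝ))^(d:ℕ) := by
    rw [hM₀, hA₀]; push_cast; ring
  have hNdε : (((N:ℝ))^(d:ℕ) : ℝ)^(ε/d) = (N:ℝ)^ε := by
    rw [← Real.rpow_natCast (N:ℝ) d, ← Real.rpow_mul (by positivity)]
    congr 1
    field_simp
  have hτ : ∀ n₁ : ℕ, n₁ ∈ XF →
      (((Kpoly.eval (n₁:ℤ)).natAbs.divisors.card : ℝ)) ≤ Cτ * A₀^(ε/d) * (N:ℝ)^ε := by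
    intro n₁ hn₁
    have hn₁G : n₁ ∈ 𝒳 ∩ Set.Icc 1 N := (Set.Finite.mem_toFinset hGfin).mp hn₁
    set k := (Kpoly.eval (n₁:ℤ)).natAbs with hk
    rcases Nat.eq_zero_or_pos k with h0 | hpos
    · rw [h0]
      simp
      positivity
    · have hkM : (k:ℝ) ≤ (M₀:ℝ) := by
        have h5 := hKbd n₁ hn₁G
        rw [Int.abs_eq_natAbs] at h5
        have h2 : (k:ℤ) ≤ M₀ := by rw [hk]; exact h5
        exact_mod_cast h2
      refine le_trans (hCτ k hpos) ?_
      calc Cτ * (k:ℝ)^(ε/d) ≤ Cτ * ((M₀:ℝ))^(ε/d) := by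
            apply mul_le_mul_of_nonneg_left _ hCτ0.le
            exact Real.rpow_le_rpow (by positivity) hkM hεd.le
      _ = Cτ * (A₀^(ε/d) * (N:ℝ)^ε) := by
            rw [hM₀R, Real.mul_rpow hA₀0 (by positivity), hNdε]
      _ = Cτ * A₀^(ε/d) * (N:ℝ)^ε := by ring
  -- put everything together in ℝ
  have hcard₄R : (F₄.card : ℝ) ≤ (XF.card : ℝ) * (2 * (Cτ * A₀^(ε/d) * (N:ℝ)^ε) * d) := by
    have h1 : (F₄.card : ℝ) ≤ ∑ n₁ ∈ XF, ((divF (Kpoly.eval (n₁:ℤ))).card * d : ℝ) := by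
      exact_mod_cast Nat.cast_le.mpr hcard₄ |>.trans (by push_cast; exact le_refl _)
    refine le_trans h1 ?_
    have h2 : ∀ n₁ ∈ XF, ((divF (Kpoly.eval (n₁:ℤ))).card * d : ℝ) ≤
        2 * (Cτ * A₀^(ε/d) * (N:ℝ)^ε) * d := by
      intro n₁ hn₁
      have h3 : ((divF (Kpoly.eval (n₁:ℤ))).card : ℝ) ≤
          2 * ((Kpoly.eval (n₁:ℤ)).natAbs.divisors.card : ℝ) := by
        exact_mod_cast hdivF_card (Kpoly.eval (n₁:ℤ))
      have h4 := hτ n₁ hn₁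
      have : ((divF (Kpoly.eval (n₁:ℤ))).card : ℝ) ≤ 2 * (Cτ * A₀^(ε/d) * (N:ℝ)^ε) := by
        linarith
      apply mul_le_mul_of_nonneg_right this (by positivity)
    refine le_trans (Finset.sum_le_sum h2) ?_
    rw [Finset.sum_const, nsmul_eq_mul]
  have hncard : (S.ncard : ℝ) ≤ ((F₁ ∪ F₂ ∪ F₃ ∪ F₄).card : ℝ) := by
    have := Set.ncard_le_ncard hsub (Finset.finite_toSet _)
    rw [Set.ncard_coe_finset] at this
    exact_mod_cast this
  have hcardU : ((F₁ ∪ F₂ ∪ F₃ ∪ F₄).card : ℝ) ≤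
      (F₁.card : ℝ) + F₂.card + F₃.card + F₄.card := by
    have h1 := Finset.card_union_le (F₁ ∪ F₂ ∪ F₃) F₄
    have h2 := Finset.card_union_le (F₁ ∪ F₂) F₃
    have h3 := Finset.card_union_le F₁ F₂
    push_cast
    have := Nat.cast_le (α := ℝ) |>.mpr h1
    exact_mod_cast (by omega : (F₁ ∪ F₂ ∪ F₃ ∪ F₄).card ≤ F₁.card + F₂.card + F₃.card + F₄.card)
  rw [hXcard]
  set X : ℝ := (XF.card : ℝ) with hX
  have hX0 : (0:ℝ) ≤ X := Nat.cast_nonneg _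
  have hc₁R : (F₁.card : ℝ) ≤ d * X := by rw [hX]; exact_mod_cast hcard₁
  have hc₂R : (F₂.card : ℝ) ≤ d * X := by rw [hX]; exact_mod_cast hcard₂
  have hc₃R : (F₃.card : ℝ) ≤ d * (X * d) := by rw [hX]; exact_mod_cast hcard₃
  have hA' : (0:ℝ) ≤ Cτ * A₀^(ε/d) := by positivity
  set Y : ℝ := (N:ℝ)^ε with hY
  have hdR0 : (0:ℝ) ≤ (d:ℝ) := by positivity
  calc (S.ncard : ℝ) ≤ (F₁.card : ℝ) + F₂.card + F₃.card + F₄.card :=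
        le_trans hncard hcardU
  _ ≤ d * X + d * X + d * (X * d) + X * (2 * (Cτ * A₀^(ε/d) * Y) * d) := by
        linarith [hcard₄R]
  _ ≤ (2*d + d*d + 2*d*Cτ*A₀^(ε/d) + 1) * Y * X := by
        nlinarith [mul_nonneg hX0 (by linarith : (0:ℝ) ≤ Y - 1),
          mul_nonneg (mul_nonneg hdR0 hX0) (by linarith : (0:ℝ) ≤ Y - 1),
          mul_nonneg (mul_nonneg (mul_nonneg hdR0 hdR0) hX0) (by linarith : (0:ℝ) ≤ Y - 1),
          mul_nonneg hA' (mul_nonneg hX0 (by linarith : (0:ℝ) ≤ Y)),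
          mul_nonneg hX0 (by linarith : (0:ℝ) ≤ Y)]
end

section
/- (Vandermonde factorization of the Wronskian-type determinant; the algebraic part of Lemma 1 of Parsell–Wooley) Let γ = (φ_1, …, φ_r) be a separated system of r polynomials. Then the Vandermonde polynomial V_r(X_1, …, X_r) = ∏_{1 ≤ i < j ≤ r} (X_j − X_i) divides the determinant det( φ_i′(X_j) )_{1 ≤ i, j ≤ r} in ℤ[X_1, …, X_r], and the quotient P, defined by det( φ_i′(X_j) )_{i, j ∈ [r]} = V_r(X_1, …, X_r) · P(X_1, …, X_r), is a nonzero polynomial of total degree ∑_{i=1}^r ( deg φ_i − i ). -/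
open MvPolynomial Finset
open scoped Classical

variable {σ : Type*} [DecidableEq σ] {A : Type*} [CommRing A]

lemma coeff_polyAeval_X (p : Polynomial A) (i : σ) (m : σ →₀ ℕ) :
    MvPolynomial.coeff m (Polynomial.aeval (MvPolynomial.X i : MvPolynomial σ A) p)
      = if m = Finsupp.single i (m i) then p.coeff (m i) else 0 := by
  induction p using Polynomial.induction_on' with
  | add p q hp hq =>
      rw [map_add, MvPolynomial.coeff_add, hp, hq, Polynomial.coeff_add]
      split_ifs <;> simp
  | monomial n a =>
      rw [Polynomial.aeval_monomial]
      have h1 : (algebraMap A (MvPolynomial σ A)) a * MvPolynomial.X i ^ n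
          = monomial (Finsupp.single i n) a := by
        rw [MvPolynomial.algebraMap_eq, X_pow_eq_monomial, C_mul_monomial, mul_one]
      rw [h1, MvPolynomial.coeff_monomial, Polynomial.coeff_monomial]
      by_cases h : Finsupp.single i n = m
      · have hmi : m i = n := by rw [← h, Finsupp.single_eq_same]
        rw [if_pos h, if_pos (show m = Finsupp.single i (m i) by rw [hmi, h]),
          if_pos hmi.symm]
      · rw [if_neg h]
        by_cases h2 : m = Finsupp.single i (m i)
        · rw [if_pos h2, if_neg fun hn => h (by rw [← hn] at h2; exact h2.symm)]
        · rw [if_neg h2]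

lemma coeff_prod_polyAeval (s : Finset σ) (p : σ → Polynomial A) (m : σ →₀ ℕ) :
    MvPolynomial.coeff m (∏ i ∈ s, Polynomial.aeval (MvPolynomial.X i : MvPolynomial σ A) (p i))
      = if ∀ j ∉ s, m j = 0 then ∏ i ∈ s, (p i).coeff (m i) else 0 := by
  induction s using Finset.induction_on generalizing m with
  | empty =>
      simp only [Finset.prod_empty, MvPolynomial.coeff_one, Finset.notMem_empty]
      by_cases h : m = 0
      · simp [h]
      · rw [if_neg (Ne.symm h), if_neg]
        intro hall
        exact h (Finsupp.ext fun j => hall j (fun hh => hh))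
  | @insert a s ha ih =>
      rw [Finset.prod_insert ha, MvPolynomial.coeff_mul]
      by_cases hH : ∀ j ∉ insert a s, m j = 0
      · rw [if_pos hH]
        rw [Finset.sum_eq_single (Finsupp.single a (m a), m.erase a)]
        · rw [coeff_polyAeval_X, ih]
          rw [if_pos (by rw [Finsupp.single_eq_same]), Finsupp.single_eq_same]
          rw [if_pos]
          · rw [Finset.prod_insert ha]
            congr 1
            refine Finset.prod_congr rfl fun i hi => ?_
            rw [Finsupp.erase_ne (fun h => ha (by rw [← h]; exact hi))]
          · intro j hj
            by_cases hja : j = a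
            · rw [hja, Finsupp.erase_same]
            · rw [Finsupp.erase_ne hja]
              exact hH j (by simp [hja, hj])
        · rintro ⟨u, v⟩ hmem hne
          rw [Finset.HasAntidiagonal.mem_antidiagonal] at hmem
          rw [coeff_polyAeval_X, ih]
          by_cases hu : u = Finsupp.single a (u a)
          · by_cases hv : ∀ j ∉ s, v j = 0
            · exfalso
              apply hne
              have hva : v a = 0 := hv a ha
              have hma : u a = m a := by
                have := DFunLike.congr_fun hmem a
                simpa [hva] using this
              have hu' : u = Finsupp.single a (m a) := by rw [hu, hma]
              have hv' : v = m.erase a := by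
                ext j
                by_cases hja : j = a
                · rw [hja, Finsupp.erase_same, hva]
                · rw [Finsupp.erase_ne hja]
                  have h3 := DFunLike.congr_fun hmem j
                  simp only [Finsupp.coe_add, Pi.add_apply] at h3
                  have h4 : u j = 0 := by
                    rw [hu]; exact Finsupp.single_eq_of_ne hja
                  omega
              rw [hu', hv']
            · rw [if_neg hv, mul_zero]
          · rw [if_neg hu, zero_mul]
        · intro hnotmem
          exact absurd (Finset.HasAntidiagonal.mem_antidiagonal.mpr (Finsupp.single_add_erase a m)) hnotmem
      · rw [if_neg hH]
        apply Finset.sum_eq_zero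
        rintro ⟨u, v⟩ hmem
        rw [Finset.HasAntidiagonal.mem_antidiagonal] at hmem
        rw [coeff_polyAeval_X, ih]
        push_neg at hH
        obtain ⟨j₀, hj₀mem, hj₀⟩ := hH
        have hj₀a : j₀ ≠ a := fun h => hj₀mem (h ▸ Finset.mem_insert_self a s)
        have hj₀s : j₀ ∉ s := fun h => hj₀mem (Finset.mem_insert_of_mem h)
        by_cases hu : u = Finsupp.single a (u a)
        · have h4 : u j₀ = 0 := by
            rw [hu]; exact Finsupp.single_eq_of_ne hj₀a
          have h3 := DFunLike.congr_fun hmem j₀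
          simp only [Finsupp.coe_add, Pi.add_apply] at h3
          have hv : ¬∀ j ∉ s, v j = 0 := by
            intro hv
            exact hj₀ (by rw [← h3, h4, hv j₀ hj₀s])
          rw [if_neg hv, mul_zero]
        · rw [if_neg hu, zero_mul]

lemma totalDegree_polyAeval_X_le (p : Polynomial A) (i : σ) :
    (Polynomial.aeval (MvPolynomial.X i : MvPolynomial σ A) p).totalDegree ≤ p.natDegree := by
  rw [MvPolynomial.totalDegree]
  apply Finset.sup_le
  intro m hm
  rw [MvPolynomial.mem_support_iff, coeff_polyAeval_X] at hm
  by_cases h : m = Finsupp.single i (m i)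
  · rw [if_pos h] at hm
    have h1 : m i ≤ p.natDegree := Polynomial.le_natDegree_of_ne_zero hm
    have h2 : (m.sum fun _ e => e) = m i := by
      conv_lhs => rw [h]
      exact Finsupp.sum_single_index rfl
    omega
  · rw [if_neg h] at hm
    exact absurd rfl hm

noncomputable def PhiH : MvPolynomial σ A →ₐ[A] Polynomial (MvPolynomial σ A) :=
  MvPolynomial.aeval (fun j => Polynomial.C (MvPolynomial.X j) * Polynomial.X)

lemma PhiH_monomial (m : σ →₀ ℕ) (a : A) :
    PhiH (monomial m a) =
      Polynomial.C (monomial m a) * Polynomial.X ^ (m.sum fun _ e => e) := by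
  rw [PhiH, MvPolynomial.aeval_monomial]
  have h1 : (m.prod fun j e => (Polynomial.C (MvPolynomial.X j : MvPolynomial σ A) *
      Polynomial.X) ^ e) = Polynomial.C (m.prod fun j e => (MvPolynomial.X j : MvPolynomial σ A) ^ e)
        * Polynomial.X ^ (m.sum fun _ e => e) := by
    rw [Finsupp.prod, Finsupp.prod, Finsupp.sum]
    simp_rw [mul_pow, ← Polynomial.C_pow]
    rw [Finset.prod_mul_distrib, ← map_prod, Finset.prod_pow_eq_pow_sum]
  rw [h1, monomial_eq, Polynomial.algebraMap_apply, MvPolynomial.algebraMap_eq, map_mul]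
  ring

lemma coeff_coeff_PhiH (f : MvPolynomial σ A) (m : σ →₀ ℕ) :
    MvPolynomial.coeff m ((PhiH f).coeff (m.sum fun _ e => e)) = MvPolynomial.coeff m f := by
  induction f using MvPolynomial.induction_on' with
  | add p q hp hq => rw [map_add, Polynomial.coeff_add, MvPolynomial.coeff_add,
      MvPolynomial.coeff_add, hp, hq]
  | monomial m' a =>
      rw [PhiH_monomial, Polynomial.coeff_C_mul, Polynomial.coeff_X_pow]
      by_cases h : m' = m
      · rw [h, if_pos rfl, mul_one]
      · rw [MvPolynomial.coeff_monomial, if_neg h]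
        split_ifs with h2
        · rw [mul_one, MvPolynomial.coeff_monomial, if_neg h]
        · simp

lemma natDegree_PhiH_le (f : MvPolynomial σ A) : (PhiH f).natDegree ≤ f.totalDegree := by
  conv_lhs => rw [f.as_sum, map_sum]
  apply Polynomial.natDegree_sum_le_of_forall_le
  intro m hm
  rw [PhiH_monomial]
  refine le_trans (Polynomial.natDegree_mul_le) ?_
  rw [Polynomial.natDegree_C, zero_add]
  refine le_trans (Polynomial.natDegree_pow_le) ?_
  refine le_trans (Nat.mul_le_mul_left _ Polynomial.natDegree_X_le) ?_
  rw [mul_one]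
  exact MvPolynomial.le_totalDegree hm

lemma PhiH_coeff_top_ne_zero {f : MvPolynomial σ A} (hf : f ≠ 0) :
    (PhiH f).coeff f.totalDegree ≠ 0 := by
  obtain ⟨m, hm, hms⟩ := Finset.exists_mem_eq_sup f.support
    (MvPolynomial.support_nonempty.mpr hf) (fun m => m.sum fun _ e => e)
  intro h
  rw [MvPolynomial.totalDegree, hms] at h
  have h2 := coeff_coeff_PhiH f m
  rw [h, MvPolynomial.coeff_zero] at h2
  exact (MvPolynomial.mem_support_iff.mp hm) h2.symm

lemma natDegree_PhiH {f : MvPolynomial σ A} (hf : f ≠ 0) :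
    (PhiH f).natDegree = f.totalDegree ∧ PhiH f ≠ 0 := by
  have h1 := PhiH_coeff_top_ne_zero hf
  exact ⟨le_antisymm (natDegree_PhiH_le f) (Polynomial.le_natDegree_of_ne_zero h1),
    fun h => h1 (by rw [h, Polynomial.coeff_zero])⟩

lemma totalDegree_mul_eq_add {A : Type*} [CommRing A] [IsDomain A] {f g : MvPolynomial σ A}
    (hf : f ≠ 0) (hg : g ≠ 0) :
    (f * g).totalDegree = f.totalDegree + g.totalDegree := by
  have hfg : f * g ≠ 0 := mul_ne_zero hf hg
  have h1 := (natDegree_PhiH hfg).1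
  rw [map_mul, Polynomial.natDegree_mul (natDegree_PhiH hf).2 (natDegree_PhiH hg).2,
    (natDegree_PhiH hf).1, (natDegree_PhiH hg).1] at h1
  exact h1.symm

lemma totalDegree_prod_eq {A : Type*} [CommRing A] [IsDomain A] {ι : Type*} (s : Finset ι)
    (q : ι → MvPolynomial σ A) (hq : ∀ i ∈ s, q i ≠ 0) :
    (∏ i ∈ s, q i).totalDegree = ∑ i ∈ s, (q i).totalDegree := by
  have hprod : (∏ i ∈ s, q i) ≠ 0 := Finset.prod_ne_zero_iff.mpr hq
  have h1 := (natDegree_PhiH hprod).1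
  rw [map_prod, Polynomial.natDegree_prod _ _ (fun i hi => (natDegree_PhiH (hq i hi)).2)] at h1
  rw [← h1]
  exact Finset.sum_congr rfl fun i hi => (natDegree_PhiH (hq i hi)).1

noncomputable def substV (a b : σ) : MvPolynomial σ A →ₐ[A] MvPolynomial σ A :=
  MvPolynomial.aeval (Function.update MvPolynomial.X b (MvPolynomial.X a))

lemma substV_X (a b k : σ) :
    substV (A := A) a b (MvPolynomial.X k) = if k = b then MvPolynomial.X a
      else MvPolynomial.X k := by
  rw [substV, MvPolynomial.aeval_X, Function.update_apply]

lemma dvd_sub_substV (a b : σ) (f : MvPolynomial σ A) :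
    (MvPolynomial.X b - MvPolynomial.X a : MvPolynomial σ A) ∣ f - substV a b f := by
  induction f using MvPolynomial.induction_on with
  | C c => rw [substV, MvPolynomial.aeval_C, MvPolynomial.algebraMap_eq, sub_self]; exact dvd_zero _
  | add p q hp hq =>
      have h := dvd_add hp hq
      rwa [show p - substV a b p + (q - substV a b q)
        = p + q - (substV a b p + substV a b q) by ring, ← map_add] at h
  | mul_X p k hp =>
      rw [map_mul, substV_X]
      have h2 : (MvPolynomial.X b - MvPolynomial.X a : MvPolynomial σ A)
          ∣ (MvPolynomial.X k - if k = b then MvPolynomial.X a else MvPolynomial.X k) := by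
        split_ifs with h
        · rw [h]
        · rw [sub_self]; exact dvd_zero _
      have h := dvd_add (hp.mul_right (MvPolynomial.X k)) (h2.mul_left (substV a b p))
      rwa [show (p - substV a b p) * MvPolynomial.X k + substV a b p *
          (MvPolynomial.X k - if k = b then MvPolynomial.X a else MvPolynomial.X k)
        = p * MvPolynomial.X k
          - substV a b p * (if k = b then MvPolynomial.X a else MvPolynomial.X k) by ring] at h

lemma prime_X_sub_X {A : Type*} [CommRing A] [IsDomain A] {a b : σ} (hab : a ≠ b) :
    Prime (MvPolynomial.X b - MvPolynomial.X a : MvPolynomial σ A) := by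
  classical
  let e := Equiv.optionSubtypeNe b
  let Ψ := (MvPolynomial.renameEquiv A e.symm).trans
    (MvPolynomial.optionEquivLeft A {k : σ // k ≠ b})
  rw [← MulEquiv.prime_iff Ψ.toMulEquiv]
  have hb : Ψ (MvPolynomial.X b) = Polynomial.X := by
    show (MvPolynomial.optionEquivLeft A _) (MvPolynomial.rename _ (MvPolynomial.X b)) = _
    rw [MvPolynomial.rename_X, Equiv.optionSubtypeNe_symm_self,
      MvPolynomial.optionEquivLeft_X_none]
  have ha : Ψ (MvPolynomial.X a) = Polynomial.C (MvPolynomial.X ⟨a, hab⟩) := by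
    show (MvPolynomial.optionEquivLeft A _) (MvPolynomial.rename _ (MvPolynomial.X a)) = _
    rw [MvPolynomial.rename_X, Equiv.optionSubtypeNe_symm_of_ne hab,
      MvPolynomial.optionEquivLeft_X_some]
  rw [show Ψ.toMulEquiv (MvPolynomial.X b - MvPolynomial.X a)
      = Ψ (MvPolynomial.X b) - Ψ (MvPolynomial.X a) from map_sub Ψ _ _, hb, ha]
  exact Polynomial.prime_X_sub_C _

lemma X_sub_X_not_dvd {A : Type*} [CommRing A] [Nontrivial A] [LinearOrder σ]
    {a b c d : σ} (hab : a < b) (hcd : c < d) (hne : (a, b) ≠ (c, d)) :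
    ¬ (MvPolynomial.X b - MvPolynomial.X a : MvPolynomial σ A)
      ∣ (MvPolynomial.X d - MvPolynomial.X c) := by
  rintro ⟨q, hq⟩
  have h0 : substV (A := A) a b (MvPolynomial.X d - MvPolynomial.X c) = 0 := by
    rw [hq, map_mul, map_sub, substV_X, substV_X, if_pos rfl, if_neg (ne_of_lt hab),
      sub_self, zero_mul]
  rw [map_sub, substV_X, substV_X] at h0
  rw [sub_eq_zero] at h0
  split_ifs at h0 with h1 h2 h2
  · exact absurd (h1 ▸ h2) (ne_of_lt hcd)
  · exact hne (by rw [Prod.mk.injEq]; exact ⟨MvPolynomial.X_injective h0, h1.symm⟩)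
  · have : d = a := MvPolynomial.X_injective h0
    exact absurd (this ▸ (h2 ▸ hcd)) (fun h => (lt_asymm h hab))
  · exact absurd (MvPolynomial.X_injective h0) (ne_of_gt hcd)

lemma prod_primes_dvd_of_dvd {R' : Type*} [CommRing R'] [IsDomain R'] {ι : Type*}
    [DecidableEq ι] (s : Finset ι) (p : ι → R') (D : R')
    (hp : ∀ i ∈ s, Prime (p i)) (hdvd : ∀ i ∈ s, p i ∣ D)
    (hnd : ∀ i ∈ s, ∀ j ∈ s, i ≠ j → ¬ p i ∣ p j) :
    (∏ i ∈ s, p i) ∣ D := by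
  induction s using Finset.induction_on with
  | empty => simpa using one_dvd D
  | @insert a s ha ih =>
      obtain ⟨Q, hQ⟩ := ih (fun i hi => hp i (Finset.mem_insert_of_mem hi))
        (fun i hi => hdvd i (Finset.mem_insert_of_mem hi))
        (fun i hi j hj hij => hnd i (Finset.mem_insert_of_mem hi) j
          (Finset.mem_insert_of_mem hj) hij)
      have hpa : Prime (p a) := hp a (Finset.mem_insert_self a s)
      have hQdvd : p a ∣ Q := by
        have h1 : p a ∣ (∏ i ∈ s, p i) * Q := hQ ▸ hdvd a (Finset.mem_insert_self a s)
        rcases (hpa.dvd_mul).mp h1 with h | h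
        · obtain ⟨i, hi, hdvd'⟩ := (hpa.dvd_finset_prod_iff _).mp h
          exact absurd hdvd' (hnd a (Finset.mem_insert_self a s) i
            (Finset.mem_insert_of_mem hi) (fun hh => ha (hh ▸ hi)))
        · exact h
      obtain ⟨Q', rfl⟩ := hQdvd
      rw [Finset.prod_insert ha]
      exact ⟨Q', by rw [hQ]; ring⟩



/-- **Vandermonde factorization of the Wronskian-type determinant (algebraic part of
Lemma 1 of Parsell–Wooley).** For a separated system `γ = (φ₁, …, φ_r)`, the
Vandermonde polynomial `∏_{i<j} (X_j − X_i)` divides `det(φ_i′(X_j))` in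
`ℤ[X₁, …, X_r]`, and the quotient `P` is a nonzero polynomial of total degree
`∑_{i=1}^r (deg φ_i − i)`. -/
theorem vandermonde_factorization {r : ℕ} (hr : 1 ≤ r)
    (φ : Fin r → Polynomial ℤ)
    (hdeg : ∀ i, 1 ≤ (φ i).natDegree)
    (hsep : StrictMono fun i => (φ i).natDegree) :
    ∃ P : MvPolynomial (Fin r) ℤ,
      Matrix.det (Matrix.of fun i j : Fin r =>
          Polynomial.aeval (MvPolynomial.X j : MvPolynomial (Fin r) ℤ)
            (Polynomial.derivative (φ i)))
        = (∏ p ∈ Finset.univ.filter (fun p : Fin r × Fin r => p.1 < p.2),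
            (MvPolynomial.X p.2 - MvPolynomial.X p.1)) * P ∧
      P ≠ 0 ∧
      P.totalDegree = ∑ i : Fin r, ((φ i).natDegree - ((i : ℕ) + 1)) := by
  classical
  set M : Matrix (Fin r) (Fin r) (MvPolynomial (Fin r) ℤ) := Matrix.of fun i j : Fin r =>
      Polynomial.aeval (MvPolynomial.X j : MvPolynomial (Fin r) ℤ)
        (Polynomial.derivative (φ i)) with hM
  set pairs : Finset (Fin r × Fin r) :=
      Finset.univ.filter (fun p : Fin r × Fin r => p.1 < p.2) with hpairs
  set V : MvPolynomial (Fin r) ℤ :=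
      ∏ p ∈ pairs, (MvPolynomial.X p.2 - MvPolynomial.X p.1) with hV
  set D := M.det with hD
  have hφne : ∀ i, φ i ≠ 0 := fun i h => by
    have := hdeg i; rw [h, Polynomial.natDegree_zero] at this; omega
  have hdi : ∀ i : Fin r, (i : ℕ) + 1 ≤ (φ i).natDegree := by
    suffices h : ∀ k, ∀ (hk : k < r), k + 1 ≤ (φ ⟨k, hk⟩).natDegree by
      intro i
      have := h i.1 i.2
      simpa using this
    intro k
    induction k with
    | zero => intro hk; exact hdeg _
    | succ n ihn =>
        intro hk
        have hn : n < r := Nat.lt_of_succ_lt hk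
        have h1 := ihn hn
        have h2 : (φ ⟨n, hn⟩).natDegree < (φ ⟨n + 1, hk⟩).natDegree :=
          hsep (show (⟨n, hn⟩ : Fin r) < ⟨n + 1, hk⟩ by simp [Fin.lt_def])
        omega
  have hC : ∀ z : ℤ, ((z : MvPolynomial (Fin r) ℤ)) = MvPolynomial.C z := fun z => by
    rw [← map_intCast (MvPolynomial.C : ℤ →+* MvPolynomial (Fin r) ℤ) z, Int.cast_id]
  -- divisibility
  have hdvd : ∀ p ∈ pairs,
      (MvPolynomial.X p.2 - MvPolynomial.X p.1 : MvPolynomial (Fin r) ℤ) ∣ D := by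
    intro p hp
    have hlt : p.1 < p.2 := (Finset.mem_filter.mp hp).2
    have h1 := dvd_sub_substV (A := ℤ) p.1 p.2 D
    have h0 : substV (A := ℤ) p.1 p.2 D = 0 := by
      have hdet := RingHom.map_det ((substV (A := ℤ) p.1 p.2 :
        MvPolynomial (Fin r) ℤ →ₐ[ℤ] MvPolynomial (Fin r) ℤ) :
          MvPolynomial (Fin r) ℤ →+* MvPolynomial (Fin r) ℤ) M
      rw [hD]
      rw [show ((substV (A := ℤ) p.1 p.2) (M.det)) = (((substV (A := ℤ) p.1 p.2 :
        MvPolynomial (Fin r) ℤ →ₐ[ℤ] MvPolynomial (Fin r) ℤ) :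
          MvPolynomial (Fin r) ℤ →+* MvPolynomial (Fin r) ℤ)) (M.det) from rfl, hdet]
      apply Matrix.det_zero_of_column_eq (ne_of_lt hlt)
      intro k
      show substV (A := ℤ) p.1 p.2 (M k p.1) = substV (A := ℤ) p.1 p.2 (M k p.2)
      rw [hM]
      simp only [Matrix.of_apply]
      rw [← Polynomial.aeval_algHom_apply, ← Polynomial.aeval_algHom_apply, substV_X, substV_X,
        if_neg (ne_of_lt hlt), if_pos rfl]
    rw [h0, sub_zero] at h1
    exact h1
  have hVdvdD : V ∣ D := by
    rw [hV]
    apply prod_primes_dvd_of_dvd pairs _ D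
    · intro p hp
      exact prime_X_sub_X (ne_of_lt (Finset.mem_filter.mp hp).2)
    · exact hdvd
    · intro p hp q hq hpq
      refine X_sub_X_not_dvd (Finset.mem_filter.mp hp).2 (Finset.mem_filter.mp hq).2 ?_
      intro h
      apply hpq
      obtain ⟨h1, h2⟩ := Prod.mk.injEq _ _ _ _ ▸ h
      exact Prod.ext h1 h2
  obtain ⟨P, hP⟩ := hVdvdD
  refine ⟨P, hP, ?_⟩
  -- the coefficient at the top monomial
  set m₀ : Fin r →₀ ℕ := Finsupp.equivFunOnFinite.symm (fun i => (φ i).natDegree - 1) with hm₀'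
  have hm₀ : ∀ j, m₀ j = (φ j).natDegree - 1 := fun j => rfl
  have hcoeff : ∀ σp : Equiv.Perm (Fin r),
      MvPolynomial.coeff m₀ (∏ i, M (σp i) i) = if σp = 1 then
        ∏ i : Fin r, (Polynomial.derivative (φ i)).coeff ((φ i).natDegree - 1) else 0 := by
    intro σp
    rw [show (∏ i, M (σp i) i) = ∏ i, Polynomial.aeval
        (MvPolynomial.X i : MvPolynomial (Fin r) ℤ) (Polynomial.derivative (φ (σp i))) from
      Finset.prod_congr rfl fun i _ => rfl]
    rw [coeff_prod_polyAeval]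
    rw [if_pos (fun j hj => absurd (Finset.mem_univ j) hj)]
    by_cases hσ : σp = 1
    · rw [if_pos hσ, hσ]
      refine Finset.prod_congr rfl fun i _ => ?_
      rw [hm₀]
      rfl
    · rw [if_neg hσ]
      have hex : ∃ i₀ : Fin r, σp i₀ < i₀ := by
        by_contra hc
        push_neg at hc
        apply hσ
        have hsum : ∑ i : Fin r, ((σp i : ℕ)) = ∑ i : Fin r, (i : ℕ) :=
          Equiv.sum_comp σp (fun i => (i : ℕ))
        have heq := (Finset.sum_eq_sum_iff_of_le (s := Finset.univ)
          (f := fun i : Fin r => (i : ℕ)) (g := fun i => (σp i : ℕ))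
          (fun i _ => hc i)).mp hsum.symm
        apply Equiv.ext
        intro i
        exact (Fin.ext ((heq i (Finset.mem_univ i)).symm) : σp i = i)
      obtain ⟨i₀, hi₀⟩ := hex
      apply Finset.prod_eq_zero (Finset.mem_univ i₀)
      rw [hm₀]
      apply Polynomial.coeff_eq_zero_of_natDegree_lt
      have h1 : (φ (σp i₀)).natDegree < (φ i₀).natDegree := hsep hi₀
      have h2 := Polynomial.natDegree_derivative_le (φ (σp i₀))
      have h3 := hdi (σp i₀)
      have h4 := hdi i₀
      omega
  have hcoeffD : MvPolynomial.coeff m₀ D =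
      ∏ i : Fin r, (Polynomial.derivative (φ i)).coeff ((φ i).natDegree - 1) := by
    rw [hD, Matrix.det_apply', MvPolynomial.coeff_sum]
    rw [Finset.sum_congr rfl (fun σp _ => by
      rw [hC, MvPolynomial.coeff_C_mul, hcoeff σp])]
    simp only [mul_ite, mul_zero]
    rw [Finset.sum_ite_eq' Finset.univ (1 : Equiv.Perm (Fin r))]
    rw [if_pos (Finset.mem_univ _), Equiv.Perm.sign_one]
    simp
  have hterm : ∀ i : Fin r, (Polynomial.derivative (φ i)).coeff ((φ i).natDegree - 1) =
      (φ i).leadingCoeff * (((φ i).natDegree - 1 : ℕ) + 1 : ℤ) := by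
    intro i
    have h1 := Polynomial.coeff_derivative (φ i) ((φ i).natDegree - 1)
    rw [h1]
    have h2 : (φ i).natDegree - 1 + 1 = (φ i).natDegree := by have := hdeg i; omega
    rw [h2, Polynomial.coeff_natDegree]
  have hcne : MvPolynomial.coeff m₀ D ≠ 0 := by
    rw [hcoeffD]
    apply Finset.prod_ne_zero_iff.mpr
    intro i _
    rw [hterm i]
    apply mul_ne_zero
    · exact Polynomial.leadingCoeff_ne_zero.mpr (hφne i)
    · have := hdeg i
      have : (0 : ℤ) < (((φ i).natDegree - 1 : ℕ) : ℤ) + 1 := by positivity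
      omega
  have hDne : D ≠ 0 := fun h => hcne (by rw [h, MvPolynomial.coeff_zero])
  have hm₀sum : (m₀.sum fun _ e => e) = ∑ i : Fin r, ((φ i).natDegree - 1) := by
    rw [Finsupp.sum_fintype _ _ (fun _ => rfl)]
    exact Finset.sum_congr rfl fun i _ => rfl
  have hge : ∑ i : Fin r, ((φ i).natDegree - 1) ≤ D.totalDegree := by
    have := MvPolynomial.le_totalDegree (p := D) (MvPolynomial.mem_support_iff.mpr hcne)
    rwa [hm₀sum] at this
  have hle : D.totalDegree ≤ ∑ i : Fin r, ((φ i).natDegree - 1) := by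
    rw [hD, Matrix.det_apply']
    refine le_trans (MvPolynomial.totalDegree_finset_sum _ _) ?_
    apply Finset.sup_le
    intro σp _
    rw [hC]
    refine le_trans (MvPolynomial.totalDegree_mul _ _) ?_
    rw [MvPolynomial.totalDegree_C, zero_add]
    refine le_trans (MvPolynomial.totalDegree_finset_prod _ _) ?_
    have hstep : ∀ i : Fin r, (M (σp i) i).totalDegree ≤ (φ (σp i)).natDegree - 1 := by
      intro i
      refine le_trans (totalDegree_polyAeval_X_le _ _) ?_
      exact Polynomial.natDegree_derivative_le _
    refine le_trans (Finset.sum_le_sum fun i _ => hstep i) ?_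
    rw [show ∑ i : Fin r, ((φ (σp i)).natDegree - 1) = ∑ i : Fin r, ((φ i).natDegree - 1) from
      Equiv.sum_comp σp (fun i => (φ i).natDegree - 1)]
  have hDdeg : D.totalDegree = ∑ i : Fin r, ((φ i).natDegree - 1) := le_antisymm hle hge
  -- V degree
  have hVfne : ∀ p ∈ pairs,
      (MvPolynomial.X p.2 - MvPolynomial.X p.1 : MvPolynomial (Fin r) ℤ) ≠ 0 :=
    fun p hp => (prime_X_sub_X (ne_of_lt (Finset.mem_filter.mp hp).2)).ne_zero
  have hVdeg1 : ∀ p ∈ pairs,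
      (MvPolynomial.X p.2 - MvPolynomial.X p.1 : MvPolynomial (Fin r) ℤ).totalDegree = 1 := by
    intro p hp
    have hlt := (Finset.mem_filter.mp hp).2
    apply le_antisymm
    · rw [sub_eq_add_neg]
      refine le_trans (MvPolynomial.totalDegree_add _ _) ?_
      rw [MvPolynomial.totalDegree_neg]
      simp [MvPolynomial.totalDegree_X]
    · have hco : MvPolynomial.coeff (Finsupp.single p.2 1)
          (MvPolynomial.X p.2 - MvPolynomial.X p.1 : MvPolynomial (Fin r) ℤ) = 1 := by
        rw [MvPolynomial.coeff_sub, MvPolynomial.coeff_X', MvPolynomial.coeff_X',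
          if_pos rfl, if_neg (fun h => (ne_of_lt hlt)
            (Finsupp.single_left_injective one_ne_zero h)), sub_zero]
      have := MvPolynomial.le_totalDegree (MvPolynomial.mem_support_iff.mpr
        (by rw [hco]; exact one_ne_zero))
      rwa [Finsupp.sum_single_index rfl] at this
  have hVdeg : V.totalDegree = pairs.card := by
    rw [hV, totalDegree_prod_eq _ _ hVfne, Finset.sum_congr rfl hVdeg1, Finset.sum_const,
      smul_eq_mul, mul_one]
  have hcard : pairs.card = ∑ i : Fin r, (i : ℕ) := by
    rw [hpairs, Finset.card_filter, Fintype.sum_prod_type, Finset.sum_comm]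
    have hinner : ∀ j : Fin r, (∑ i : Fin r, if (i, j).1 < (i, j).2 then 1 else 0) = (j : ℕ) := by
      intro j
      rw [Finset.sum_boole]
      have h5 : Finset.univ.filter (fun i : Fin r => i < j) = Finset.Iio j := by
        ext i; simp
      rw [h5, Fin.card_Iio]
      simp
    rw [Finset.sum_congr rfl fun j _ => hinner j]
  have hVne : V ≠ 0 := by rw [hV]; exact Finset.prod_ne_zero_iff.mpr hVfne
  have hPne : P ≠ 0 := fun h => hDne (by rw [hP, h, mul_zero])
  have hsplit : D.totalDegree = V.totalDegree + P.totalDegree := by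
    rw [hP]; exact totalDegree_mul_eq_add hVne hPne
  refine ⟨hPne, ?_⟩
  have hfin : ∀ i : Fin r, (φ i).natDegree - 1 = ((φ i).natDegree - ((i : ℕ) + 1)) + (i : ℕ) :=
    fun i => by have := hdi i; omega
  have hs1 : ∑ i : Fin r, ((φ i).natDegree - 1) =
      (∑ i : Fin r, ((φ i).natDegree - ((i : ℕ) + 1))) + ∑ i : Fin r, (i : ℕ) := by
    rw [← Finset.sum_add_distrib]
    exact Finset.sum_congr rfl fun i _ => hfin i
  omega
end
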